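/- There exists an increasing quasisymmetric homeomorphism f : R → R and a constant c > 0 such that ω_f(Q) ≥ c for every dyadic interval Q with ℓ(Q) ≤ 1. In particular, for quasisymmetric maps of the real line, having big pieces of bi-Lipschitz images in the image does not imply ω_f(x,r)² dx dr/r is a Carleson measure. -/

import Mathlib

open MeasureTheory Metric Set

/-- The normalized affine approximation number `ω_f(Q)` for `f : ℝ → ℝ`, where affine maps are
`x ↦ p.1 * x + p.2` with nonzero slope `p.1`. -/
noncomputable def omegaI (f : ℝ → ℝ) (Q : Set ℝ) : ℝ :=
  ⨅ A : {p : ℝ × ℝ // p.1 ≠ 0},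
    Real.sqrt (⨍ x in Q, (f x - (A.val.1 * x + A.val.2)) ^ 2 / (|A.val.1| * Metric.diam Q) ^ 2)

open Filter

noncomputable section
namespace QSC

/-- weights: 1/8 for residues 0,3 mod 4; 3/8 for 1,2. -/
def w (k : ℤ) : ℝ := if k % 4 = 0 ∨ k % 4 = 3 then 1/8 else 3/8

/-- partial sums of weights below the residue. -/
def S (k : ℤ) : ℝ :=
  if k % 4 = 0 then 0 else if k % 4 = 1 then 1/8 else if k % 4 = 2 then 1/2 else 7/8

/-- value of the limit function at `k/4`. -/
def cc (k : ℤ) : ℝ := (k / 4 : ℤ) + S k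

lemma w_cases (k : ℤ) : w k = 1/8 ∨ w k = 3/8 := by
  unfold w; split <;> simp

lemma w_pos (k : ℤ) : 0 < w k := by rcases w_cases k with h | h <;> rw [h] <;> norm_num

lemma w_le (k : ℤ) : w k ≤ 3/8 := by rcases w_cases k with h | h <;> rw [h] <;> norm_num

lemma w_ge (k : ℤ) : 1/8 ≤ w k := by rcases w_cases k with h | h <;> rw [h] <;> norm_num

lemma emod4 (k : ℤ) : k % 4 = 0 ∨ k % 4 = 1 ∨ k % 4 = 2 ∨ k % 4 = 3 := by omega

lemma w_add_four (k : ℤ) : w (k + 4) = w k := by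
  unfold w; have : (k+4) % 4 = k % 4 := by omega
  rw [this]

lemma cc_add_four (k : ℤ) : cc (k + 4) = cc k + 1 := by
  unfold cc S
  have h1 : (k+4)/4 = k/4 + 1 := by omega
  have h2 : (k+4) % 4 = k % 4 := by omega
  rw [h1, h2]; push_cast; ring

lemma cc_succ (k : ℤ) : cc (k + 1) = cc k + w k := by
  unfold cc S w
  rcases emod4 k with h | h | h | h <;>
    [skip; skip; skip; skip] <;>
  · have h1 : (k+1) % 4 = (k % 4 + 1) % 4 := by omega
    have h2 : (k+1)/4 = if k % 4 = 3 then k/4 + 1 else k/4 := by split <;> omega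
    rw [h2]; simp [h, h1] <;> push_cast <;> ring

lemma cc_zero : cc 0 = 0 := by unfold cc S; norm_num

lemma cc_neg (k : ℤ) : cc (-k) = -cc k := by
  unfold cc S
  rcases emod4 k with h | h | h | h
  · have h1 : (-k) % 4 = 0 := by omega
    have h2 : (-k)/4 = -(k/4) := by omega
    rw [h1, h2, h]; push_cast; ring
  · have h1 : (-k) % 4 = 3 := by omega
    have h2 : (-k)/4 = -(k/4) - 1 := by omega
    rw [h1, h2, h]; norm_num; push_cast; ring
  · have h1 : (-k) % 4 = 2 := by omega
    have h2 : (-k)/4 = -(k/4) - 1 := by omega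
    rw [h1, h2, h]; norm_num; push_cast; ring
  · have h1 : (-k) % 4 = 1 := by omega
    have h2 : (-k)/4 = -(k/4) - 1 := by omega
    rw [h1, h2, h]; norm_num; push_cast; ring

lemma w_reflect (k : ℤ) : w (-k - 1) = w k := by
  unfold w
  rcases emod4 k with h | h | h | h <;>
  · have h1 : (-k-1) % 4 = 3 - k % 4 := by omega
    rw [h1, h]; norm_num

lemma cc_mono : Monotone cc := by
  have h : ∀ k : ℤ, cc k ≤ cc (k + 1) := fun k => by
    rw [cc_succ]; linarith [w_pos k]
  intro a b hab
  obtain ⟨n, rfl⟩ : ∃ n : ℕ, b = a + n := ⟨(b - a).toNat, by omega⟩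
  induction n with
  | zero => simp
  | succ m ih =>
    have := h (a + m)
    have h2 : a ≤ a + (m:ℤ) := by omega
    calc cc a ≤ cc (a + m) := ih h2
    _ ≤ cc (a + m + 1) := h (a + m)
    _ = cc (a + (m+1:ℕ)) := by push_cast; ring_nf

/-- one step of the iteration -/
def phi (u : ℝ → ℝ) (x : ℝ) : ℝ := cc ⌊4*x⌋ + w ⌊4*x⌋ * u (4*x - ⌊4*x⌋)

def fseq : ℕ → ℝ → ℝ
  | 0 => fun x => x
  | (n+1) => phi (fseq n)

lemma fseq_zero (n : ℕ) : fseq n 0 = 0 := by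
  induction n with
  | zero => rfl
  | succ m ih =>
    show phi (fseq m) 0 = 0
    unfold phi
    norm_num [cc_zero, ih]

lemma fseq_add_one (n : ℕ) (x : ℝ) : fseq n (x + 1) = fseq n x + 1 := by
  induction n generalizing x with
  | zero => rfl
  | succ m ih =>
    show phi (fseq m) (x+1) = phi (fseq m) x + 1
    unfold phi
    have h4 : 4*(x+1) = 4*x + (4:ℤ) := by push_cast; ring
    rw [h4, Int.floor_add_intCast]
    rw [cc_add_four, w_add_four]
    push_cast
    ring_nf

lemma fseq_one (n : ℕ) : fseq n 1 = 1 := by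
  have := fseq_add_one n 0
  simpa [fseq_zero n] using this

lemma fseq_int_add (n : ℕ) (j : ℤ) (x : ℝ) : fseq n (x + j) = fseq n x + j := by
  induction j using Int.induction_on with
  | zero => simp
  | succ m ih =>
    push_cast
    have h : x + ((m:ℝ) + 1) = (x + m) + 1 := by ring
    rw [h, fseq_add_one]
    push_cast at ih
    rw [ih]; ring
  | pred m ih =>
    push_cast
    have h : x + (-(m:ℝ) - 1) + 1 = x + -(m:ℝ) := by ring
    have h2 := fseq_add_one n (x + (-(m:ℝ) - 1))
    rw [h] at h2
    push_cast at ih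
    linarith

lemma fseq_mono (n : ℕ) : Monotone (fseq n) := by
  induction n with
  | zero => exact fun a b h => h
  | succ m ih =>
    intro x y hxy
    show phi (fseq m) x ≤ phi (fseq m) y
    unfold phi
    have hk : ⌊4*x⌋ ≤ ⌊4*y⌋ := Int.floor_le_floor (by linarith)
    rcases eq_or_lt_of_le hk with he | hl
    · rw [← he]
      have : fseq m (4*x - ⌊4*x⌋) ≤ fseq m (4*y - ⌊4*x⌋) := ih (by linarith)
      nlinarith [w_pos ⌊4*x⌋]
    · -- different pieces
      have h1 : fseq m (4*x - ⌊4*x⌋) ≤ 1 := by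
        have : (4*x - ⌊4*x⌋) ≤ 1 := by have := Int.lt_floor_add_one (4*x); linarith
        calc fseq m (4*x - ⌊4*x⌋) ≤ fseq m 1 := ih this
        _ = 1 := fseq_one m
      have h2 : 0 ≤ fseq m (4*y - ⌊4*y⌋) := by
        have : (0:ℝ) ≤ 4*y - ⌊4*y⌋ := by have := Int.floor_le (4*y); linarith
        calc (0:ℝ) = fseq m 0 := (fseq_zero m).symm
        _ ≤ fseq m (4*y - ⌊4*y⌋) := ih this
      have hc : cc (⌊4*x⌋ + 1) ≤ cc ⌊4*y⌋ := cc_mono hl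
      rw [cc_succ] at hc
      nlinarith [w_pos ⌊4*x⌋, w_pos ⌊4*y⌋]

lemma cc_near (k : ℤ) : |cc k - (k:ℝ)/4| ≤ 1/4 := by
  have hk : (k:ℝ) = 4*((k/4 : ℤ):ℝ) + ((k%4 : ℤ):ℝ) := by
    exact_mod_cast (Int.mul_ediv_add_emod k 4).symm
  unfold cc S
  rcases emod4 k with h | h | h | h <;> rw [h] <;> rw [h] at hk <;> push_cast at hk ⊢ <;>
    rw [abs_le] <;> constructor <;> nlinarith

lemma fseq_diff_bound (n : ℕ) (x : ℝ) : |fseq (n+1) x - fseq n x| ≤ 2 * (3/8)^n := by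
  induction n generalizing x with
  | zero =>
    show |phi (fun x => x) x - x| ≤ 2 * (3/8)^0
    unfold phi
    set k := ⌊4*x⌋ with hk
    have h1 : (k:ℝ) ≤ 4*x := Int.floor_le (4*x)
    have h2 : 4*x < (k:ℝ) + 1 := Int.lt_floor_add_one (4*x)
    have h3 := cc_near k
    have h4 := w_pos k
    have h5 := w_le k
    rw [abs_le] at h3 ⊢
    norm_num
    constructor <;> nlinarith
  | succ m ih =>
    show |phi (fseq (m+1)) x - phi (fseq m) x| ≤ 2 * (3/8)^(m+1)
    unfold phi
    set k := ⌊4*x⌋ with hk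
    have heq : cc k + w k * fseq (m+1) (4*x - k) - (cc k + w k * fseq m (4*x - k))
        = w k * (fseq (m+1) (4*x - k) - fseq m (4*x - k)) := by ring
    rw [heq, abs_mul, abs_of_pos (w_pos k)]
    have := ih (4*x - k)
    have h5 := w_le k
    have hb : |fseq (m+1) (4*x - k) - fseq m (4*x - k)| ≤ 2*(3/8)^m := this
    calc w k * |fseq (m + 1) (4 * x - ↑k) - fseq m (4 * x - ↑k)| ≤ (3/8) * (2*(3/8)^m) := by
          apply mul_le_mul h5 hb (abs_nonneg _) (by norm_num)
    _ = 2 * (3/8)^(m+1) := by ring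

/-- the quasisymmetric function -/
def f (x : ℝ) : ℝ := x + ∑' n, (fseq (n+1) x - fseq n x)

lemma summable_diff (x : ℝ) : Summable (fun n => fseq (n+1) x - fseq n x) := by
  apply Summable.of_norm_bounded (g := fun n => 2 * (3/8:ℝ)^n)
  · exact (summable_geometric_of_lt_one (by norm_num) (by norm_num)).mul_left 2
  · intro n; exact fseq_diff_bound n x

lemma fseq_partial (n : ℕ) (x : ℝ) :
    fseq n x = x + ∑ k ∈ Finset.range n, (fseq (k+1) x - fseq k x) := by
  induction n with
  | zero => simp [(show fseq 0 = fun x => x from rfl)]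
  | succ m ih => rw [Finset.sum_range_succ]; rw [ih] at *; ring

lemma tendsto_fseq (x : ℝ) : Tendsto (fun n => fseq n x) atTop (nhds (f x)) := by
  have h := (summable_diff x).hasSum.tendsto_sum_nat
  have h2 := (tendsto_const_nhds (x := x) (f := atTop)).add h
  have he : (fun n => fseq n x) = fun n => x + ∑ k ∈ Finset.range n, (fseq (k+1) x - fseq k x) :=
    funext fun n => fseq_partial n x
  rw [he]
  exact h2


lemma fseq_neg (n : ℕ) (x : ℝ) : fseq n (-x) = -fseq n x := by
  induction n generalizing x with
  | zero => rfl
  | succ m ih =>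
    show phi (fseq m) (-x) = -phi (fseq m) x
    unfold phi
    by_cases hI : ∃ m' : ℤ, 4*x = (m':ℝ)
    · obtain ⟨k, hk⟩ := hI
      have h1 : ⌊4*x⌋ = k := by rw [hk]; exact Int.floor_intCast k
      have h2 : ⌊4*(-x)⌋ = -k := by
        have : 4*(-x) = ((-k : ℤ):ℝ) := by push_cast; linarith
        rw [this]; exact Int.floor_intCast _
      rw [h1, h2]
      have e1 : 4 * -x - ((-k : ℤ):ℝ) = 0 := by push_cast; linarith
      have e2 : 4 * x - ((k : ℤ):ℝ) = 0 := by push_cast; linarith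
      rw [e1, e2, fseq_zero m, cc_neg]
      ring
    · set k := ⌊4*x⌋ with hkdef
      have h1 : (k:ℝ) ≤ 4*x := Int.floor_le (4*x)
      have h1' : (k:ℝ) < 4*x := by
        rcases eq_or_lt_of_le h1 with he | hl
        · exact absurd ⟨k, he.symm⟩ hI
        · exact hl
      have h2 : 4*x < (k:ℝ) + 1 := Int.lt_floor_add_one (4*x)
      have h3 : ⌊4*(-x)⌋ = -k - 1 := by
        apply Int.floor_eq_iff.mpr
        constructor <;> push_cast <;> [linarith; linarith]
      rw [h3, w_reflect]
      have h4 : cc (-k - 1) = -(cc k + w k) := by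
        have : (-k - 1) = -(k+1) := by ring
        rw [this, cc_neg, cc_succ]
      rw [h4]
      have h5 : 4*(-x) - ((-k-1 : ℤ):ℝ) = -(4*x - k) + 1 := by push_cast; ring
      rw [h5, fseq_add_one, ih]
      ring

lemma f_zero : f 0 = 0 :=
  tendsto_nhds_unique (tendsto_fseq 0)
    (by simp only [fseq_zero]; exact tendsto_const_nhds)

lemma f_add_one (x : ℝ) : f (x + 1) = f x + 1 := by
  refine tendsto_nhds_unique (tendsto_fseq (x+1)) ?_
  have : (fun n => fseq n (x+1)) = fun n => fseq n x + 1 := funext fun n => fseq_add_one n x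
  rw [this]
  exact (tendsto_fseq x).add tendsto_const_nhds

lemma f_int_add (j : ℤ) (x : ℝ) : f (x + j) = f x + j := by
  refine tendsto_nhds_unique (tendsto_fseq (x + j)) ?_
  have : (fun n => fseq n (x + j)) = fun n => fseq n x + j := funext fun n => fseq_int_add n j x
  rw [this]
  exact (tendsto_fseq x).add tendsto_const_nhds

lemma f_int (j : ℤ) : f j = j := by
  have := f_int_add j 0
  simpa [f_zero] using this

lemma f_one : f 1 = 1 := by exact_mod_cast f_int 1

lemma f_neg (x : ℝ) : f (-x) = -f x := by
  refine tendsto_nhds_unique (tendsto_fseq (-x)) ?_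
  have : (fun n => fseq n (-x)) = fun n => -(fseq n x) := funext fun n => fseq_neg n x
  rw [this]
  exact (tendsto_fseq x).neg

lemma f_mono : Monotone f := by
  intro x y hxy
  exact le_of_tendsto_of_tendsto' (tendsto_fseq x) (tendsto_fseq y) fun n => fseq_mono n hxy

lemma f_eq (x : ℝ) : f x = cc ⌊4*x⌋ + w ⌊4*x⌋ * f (4*x - ⌊4*x⌋) := by
  have h1 : Tendsto (fun n => phi (fseq n) x) atTop
      (nhds (cc ⌊4*x⌋ + w ⌊4*x⌋ * f (4*x - ⌊4*x⌋))) := by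
    unfold phi
    exact tendsto_const_nhds.add (((tendsto_fseq (4*x - ⌊4*x⌋)).const_mul _))
  have h2 : Tendsto (fun n => fseq (n+1) x) atTop (nhds (f x)) :=
    (tendsto_fseq x).comp (tendsto_add_atTop_nat 1)
  exact tendsto_nhds_unique h2 h1

lemma f_quarter (k : ℤ) {t : ℝ} (ht : t ∈ Icc (0:ℝ) 1) :
    f (((k:ℝ) + t)/4) = cc k + w k * f t := by
  obtain ⟨ht0, ht1⟩ := ht
  rcases eq_or_lt_of_le ht1 with he | hl
  · subst he
    have h4 : 4 * (((k:ℝ) + 1)/4) = ((k+1 : ℤ):ℝ) := by push_cast; ring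
    have := f_eq (((k:ℝ) + 1)/4)
    rw [h4, Int.floor_intCast] at this
    rw [this, f_one]
    push_cast
    rw [show ((k:ℝ)+1) - ((k:ℝ)+1) = 0 by ring, f_zero, cc_succ]
    ring
  · have h4 : 4 * (((k:ℝ) + t)/4) = (k:ℝ) + t := by ring
    have hfl : ⌊(k:ℝ) + t⌋ = k := by
      rw [add_comm, Int.floor_add_intCast]
      have : ⌊t⌋ = 0 := Int.floor_eq_zero_iff.mpr ⟨ht0, hl⟩
      omega
    have := f_eq (((k:ℝ) + t)/4)
    rw [h4, hfl] at this
    rw [this]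
    ring_nf


/-- measure of the 4-adic interval `[j/4^n, (j+1)/4^n]`. -/
def W : ℕ → ℤ → ℝ
  | 0, _ => 1
  | (n+1), j => W n (j / 4) * w j

lemma W_pos (n : ℕ) (j : ℤ) : 0 < W n j := by
  induction n generalizing j with
  | zero => norm_num [W]
  | succ m ih => exact mul_pos (ih _) (w_pos j)

lemma W_le (n : ℕ) (j : ℤ) : W n j ≤ (3/8)^n := by
  induction n generalizing j with
  | zero => norm_num [W]
  | succ m ih =>
    show W m (j/4) * w j ≤ (3/8)^(m+1)
    calc W m (j/4) * w j ≤ (3/8)^m * (3/8) :=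
          mul_le_mul (ih _) (w_le j) (le_of_lt (w_pos j)) (by positivity)
    _ = (3/8)^(m+1) := by ring

lemma selfSim (n : ℕ) (j : ℤ) {t : ℝ} (ht : t ∈ Icc (0:ℝ) 1) :
    f (((j:ℝ) + t)/4^n) = f ((j:ℝ)/4^n) + W n j * f t := by
  induction n generalizing j t with
  | zero =>
    simp only [pow_zero, div_one, W]
    rw [add_comm, f_int_add, f_int]
    ring
  | succ m ih =>
    obtain ⟨ht0, ht1⟩ := ht
    set q := j / 4 with hq
    set r := j % 4 with hr
    have hj : j = 4*q + r := by rw [hq, hr]; omega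
    have hr0 : (0:ℝ) ≤ (r:ℝ) := by exact_mod_cast (show (0:ℤ) ≤ r by omega)
    have hr3 : (r:ℝ) ≤ 3 := by exact_mod_cast (show r ≤ 3 by omega)
    have hs : ((r:ℝ) + t)/4 ∈ Icc (0:ℝ) 1 := by
      constructor
      · positivity
      · rw [div_le_one (by norm_num)]; linarith
    have hs0 : ((r:ℝ) + 0)/4 ∈ Icc (0:ℝ) 1 := by
      constructor
      · positivity
      · rw [div_le_one (by norm_num)]; linarith
    have key : ∀ u : ℝ, u ∈ Icc (0:ℝ) 1 → f (((j:ℝ) + u)/4^(m+1)) =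
        f ((q:ℝ)/4^m) + W m q * (cc r + w r * f u) := by
      intro u hu
      have harg : ((j:ℝ) + u)/4^(m+1) = ((q:ℝ) + ((r:ℝ) + u)/4)/4^m := by
        rw [hj]; push_cast; field_simp; ring
      have hmem : ((r:ℝ) + u)/4 ∈ Icc (0:ℝ) 1 := by
        obtain ⟨hu0, hu1⟩ := hu
        constructor
        · positivity
        · rw [div_le_one (by norm_num)]; linarith
      rw [harg, ih q hmem, f_quarter r hu]
    have h1 := key t ⟨ht0, ht1⟩
    have h2 := key 0 ⟨le_refl 0, by norm_num⟩
    rw [f_zero] at h2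
    have hW : W (m+1) j = W m q * w j := rfl
    have hwj : w j = w r := by
      unfold w
      have : j % 4 = r % 4 := by omega
      rw [this]
    have hj0 : ((j:ℝ) + 0)/4^(m+1) = (j:ℝ)/4^(m+1) := by norm_num
    rw [hj0] at h2
    rw [h1, h2, hW, hwj]
    ring

lemma grid_incr (n : ℕ) (j : ℤ) :
    f (((j:ℤ)+1:ℤ)/4^n : ℝ) = f ((j:ℝ)/4^n) + W n j := by
  have := selfSim n j (t := 1) ⟨by norm_num, le_refl 1⟩
  rw [f_one] at this
  push_cast
  push_cast at this
  rw [this]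
  ring

lemma W_adj (n : ℕ) (j : ℤ) : W n (j+1) ≤ 3 * W n j ∧ W n j ≤ 3 * W n (j+1) := by
  induction n generalizing j with
  | zero => norm_num [W]
  | succ m ih =>
    have h1 : W (m+1) j = W m (j/4) * w j := rfl
    have h2 : W (m+1) (j+1) = W m ((j+1)/4) * w (j+1) := rfl
    rcases emod4 j with h | h | h | h
    · have e1 : (j+1)/4 = j/4 := by omega
      have e2 : w j = 1/8 := by unfold w; rw [h]; norm_num
      have e3 : w (j+1) = 3/8 := by unfold w; have : (j+1)%4 = 1 := by omega
                                    rw [this]; norm_num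
      rw [h1, h2, e1, e2, e3]
      have := W_pos m (j/4)
      constructor <;> nlinarith
    · have e1 : (j+1)/4 = j/4 := by omega
      have e2 : w j = 3/8 := by unfold w; rw [h]; norm_num
      have e3 : w (j+1) = 3/8 := by unfold w; have : (j+1)%4 = 2 := by omega
                                    rw [this]; norm_num
      rw [h1, h2, e1, e2, e3]
      have := W_pos m (j/4)
      constructor <;> nlinarith
    · have e1 : (j+1)/4 = j/4 := by omega
      have e2 : w j = 3/8 := by unfold w; rw [h]; norm_num
      have e3 : w (j+1) = 1/8 := by unfold w; have : (j+1)%4 = 3 := by omega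
                                    rw [this]; norm_num
      rw [h1, h2, e1, e2, e3]
      have := W_pos m (j/4)
      constructor <;> nlinarith
    · have e1 : (j+1)/4 = j/4 + 1 := by omega
      have e2 : w j = 1/8 := by unfold w; rw [h]; norm_num
      have e3 : w (j+1) = 1/8 := by unfold w; have : (j+1)%4 = 0 := by omega
                                    rw [this]; norm_num
      rw [h1, h2, e1, e2, e3]
      obtain ⟨ha, hb⟩ := ih (j/4)
      constructor <;> nlinarith

lemma W_adj_le (n : ℕ) (j : ℤ) : W n (j+1) ≤ 3 * W n j := (W_adj n j).1
lemma W_adj_ge (n : ℕ) (j : ℤ) : W n j ≤ 3 * W n (j+1) := (W_adj n j).2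


lemma f_mod (n : ℕ) (a b : ℝ) (hab : a ≤ b) (hb : b ≤ a + ((1:ℝ)/4)^n) :
    f b - f a ≤ 2*(3/8)^n := by
  set j := ⌊a * 4^n⌋ with hj
  have h4 : (0:ℝ) < 4^n := by positivity
  have hja : (j:ℝ)/4^n ≤ a := by
    rw [div_le_iff₀ h4]; exact Int.floor_le (a * 4^n)
  have ha1 : a < ((j:ℝ)+1)/4^n := by
    rw [lt_div_iff₀ h4]
    have := Int.lt_floor_add_one (a * 4^n)
    linarith
  have hb2 : b ≤ ((j:ℝ)+2)/4^n := by
    rw [le_div_iff₀ h4]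
    have h5 : ((1:ℝ)/4)^n = 1/4^n := by rw [div_pow]; norm_num
    rw [h5] at hb
    have h6 := mul_le_mul_of_nonneg_right hb (le_of_lt h4)
    have h7 : (a + 1/4^n) * 4^n = a * 4^n + 1 := by field_simp
    have h8 := Int.lt_floor_add_one (a * 4^n)
    linarith
  have e1 : f (((j:ℝ)+1)/4^n) = f ((j:ℝ)/4^n) + W n j := by
    have := grid_incr n j; push_cast at this; exact this
  have e2 : f (((j:ℝ)+2)/4^n) = f (((j:ℝ)+1)/4^n) + W n (j+1) := by
    have := grid_incr n (j+1); push_cast at this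
    rw [show (j:ℝ)+1+1 = (j:ℝ)+2 by ring] at this
    exact this
  have m1 := f_mono hja
  have m2 := f_mono hb2
  have := W_le n j
  have := W_le n (j+1)
  linarith

lemma f_cont : Continuous f := by
  rw [Metric.continuous_iff]
  intro x ε hε
  obtain ⟨n, hn⟩ := exists_pow_lt_of_lt_one (show (0:ℝ) < ε/4 by linarith) (show (3/8:ℝ) < 1 by norm_num)
  refine ⟨((1:ℝ)/4)^n, by positivity, fun y hy => ?_⟩
  rw [Real.dist_eq] at hy ⊢
  have key : ∀ u v : ℝ, u ≤ v → v ≤ u + ((1:ℝ)/4)^n → |f v - f u| ≤ 2*(3/8)^n := by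
    intro u v huv h
    rw [abs_of_nonneg (by linarith [f_mono huv])]
    exact f_mod n u v huv h
  have habs := abs_le.mp (le_of_lt hy)
  rcases le_total x y with h | h
  · have := key x y h (by linarith [habs.2])
    calc |f y - f x| ≤ 2*(3/8)^n := this
    _ < 2*(ε/4) := by nlinarith
    _ < ε := by linarith
  · have := key y x h (by linarith [habs.1])
    rw [abs_sub_comm]
    calc |f x - f y| ≤ 2*(3/8)^n := this
    _ < 2*(ε/4) := by nlinarith
    _ < ε := by linarith

lemma f_strictMono : StrictMono f := by
  intro x y hxy
  obtain ⟨n, hn⟩ := exists_pow_lt_of_lt_one (show (0:ℝ) < (y-x)/2 by linarith)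
    (show (1/4:ℝ) < 1 by norm_num)
  set j := ⌈x * 4^n⌉ with hj
  have h4 : (0:ℝ) < 4^n := by positivity
  have hxp : x ≤ (j:ℝ)/4^n := by
    rw [le_div_iff₀ h4]; exact Int.le_ceil (x * 4^n)
  have hp1 : ((j:ℝ)+1)/4^n ≤ y := by
    rw [div_le_iff₀ h4]
    have hq : ((1:ℝ)/4)^n = 1/4^n := by rw [div_pow]; norm_num
    rw [hq] at hn
    have hc : (j:ℝ) < x * 4^n + 1 := Int.ceil_lt_add_one (x * 4^n)
    have h6 : (x + 2*(1/4^n)) * 4^n ≤ y * 4^n := by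
      apply mul_le_mul_of_nonneg_right _ (le_of_lt h4)
      linarith
    have h7 : (x + 2*(1/4^n)) * 4^n = x * 4^n + 2 := by field_simp
    linarith
  have e1 : f (((j:ℝ)+1)/4^n) = f ((j:ℝ)/4^n) + W n j := by
    have := grid_incr n j; push_cast at this; exact this
  have := W_pos n j
  have m1 := f_mono hxp
  have m2 := f_mono hp1
  linarith

lemma f_surj : Function.Surjective f := by
  intro y
  set m := ⌊y⌋ with hm
  have h1 : f m = m := f_int m
  have h2 : f ((m:ℝ)+1) = (m:ℝ)+1 := by exact_mod_cast f_int (m+1)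
  have hy : y ∈ Icc (f (m:ℝ)) (f ((m:ℝ)+1)) := by
    rw [h1, h2]
    exact ⟨Int.floor_le y, by linarith [Int.lt_floor_add_one y]⟩
  have := intermediate_value_Icc (show (m:ℝ) ≤ (m:ℝ)+1 by linarith) f_cont.continuousOn hy
  obtain ⟨x, _, hx⟩ := this
  exact ⟨x, hx⟩


lemma Lpow (n : ℕ) : ((1:ℝ)/4)^n = 1/(4:ℝ)^n := by rw [div_pow]; norm_num

lemma grid_pt (n : ℕ) (j : ℤ) : (j:ℝ)/(4:ℝ)^n = (j:ℝ)*((1:ℝ)/4)^n := by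
  rw [Lpow]; ring

lemma grid_incr' (n : ℕ) (j : ℤ) :
    f ((j:ℝ)*((1:ℝ)/4)^n + ((1:ℝ)/4)^n) = f ((j:ℝ)*((1:ℝ)/4)^n) + W n j := by
  have h := grid_incr n j
  rw [grid_pt n (j+1), grid_pt n j] at h
  push_cast at h
  rw [← h]
  congr 1
  ring

lemma exists_scale {h : ℝ} (h0 : 0 < h) (h1 : h < 1) :
    ∃ n : ℕ, ((1:ℝ)/4)^(n+1) ≤ h ∧ h < ((1:ℝ)/4)^n := by
  have hex : ∃ n : ℕ, ((1:ℝ)/4)^(n+1) ≤ h := by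
    obtain ⟨m, hm⟩ := exists_pow_lt_of_lt_one h0 (show (1/4:ℝ) < 1 by norm_num)
    exact ⟨m, by calc ((1:ℝ)/4)^(m+1) ≤ (1/4)^m := by
                        apply pow_le_pow_of_le_one (by norm_num) (by norm_num) (by omega)
                 _ ≤ h := le_of_lt hm⟩
  classical
  refine ⟨Nat.find hex, Nat.find_spec hex, ?_⟩
  rcases Nat.eq_zero_or_pos (Nat.find hex) with hz | hp
  · rw [hz]; simpa using h1
  · have hmin := Nat.find_min hex (m := Nat.find hex - 1) (by omega)
    have he : Nat.find hex - 1 + 1 = Nat.find hex := by omega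
    rw [he] at hmin
    linarith [not_le.mp hmin]

set_option maxHeartbeats 2000000 in
lemma doubR (x h : ℝ) (h0 : 0 < h) :
    f (x + 2*h) - f (x + h) ≤ 2304 * (f (x + h) - f x) := by
  rcases lt_or_ge h 1 with hsmall | hbig
  · obtain ⟨n, hn1, hn2⟩ := exists_scale h0 hsmall
    set L : ℝ := ((1:ℝ)/4)^n with hL
    set L2 : ℝ := ((1:ℝ)/4)^(n+2) with hL2
    have hLpos : 0 < L := by positivity
    have hL2pos : 0 < L2 := by positivity
    have hL16 : L = 16 * L2 := by rw [hL, hL2]; ring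
    have hLh : L ≤ 4 * h := by
      have he : ((1:ℝ)/4)^(n+1) = L/4 := by rw [hL]; ring
      rw [he] at hn1; linarith
    set j1 := ⌊(x+h)/L⌋ with hj1
    have hj1a : (j1:ℝ)*L ≤ x+h := by
      have := Int.floor_le ((x+h)/L)
      calc (j1:ℝ)*L ≤ ((x+h)/L)*L := by nlinarith
      _ = x+h := by field_simp
    have hj1b : x+h < ((j1:ℝ)+1)*L := by
      have := Int.lt_floor_add_one ((x+h)/L)
      calc x+h = ((x+h)/L)*L := by field_simp
      _ < ((j1:ℝ)+1)*L := by nlinarith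
    have e1 := grid_incr' n j1
    rw [← hL] at e1
    have e2 := grid_incr' n (j1+1)
    rw [← hL] at e2
    push_cast at e2
    have hup : f (x+2*h) - f (x+h) ≤ W n j1 + W n (j1+1) := by
      have hx2 : x+2*h ≤ ((j1:ℝ)+1)*L + L := by nlinarith
      have m2 := f_mono hx2
      have m3 := f_mono hj1a
      have e1' : f ((j1:ℝ)*L + L) = f ((j1:ℝ)*L) + W n j1 := e1
      have e2' : f (((j1:ℝ)+1)*L + L) = f (((j1:ℝ)+1)*L) + W n (j1+1) := e2
      have hcongr : ((j1:ℝ)+1)*L = (j1:ℝ)*L + L := by ring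
      rw [hcongr] at m2
      rw [hcongr] at e2'
      rw [e2', e1'] at m2
      linarith
    set k := ⌈x/L2⌉ with hk
    have hka : x ≤ (k:ℝ)*L2 := by
      have := Int.le_ceil (x/L2)
      calc x = (x/L2)*L2 := by field_simp
      _ ≤ (k:ℝ)*L2 := by nlinarith
    have hkb : (k:ℝ)*L2 < x + L2 := by
      have := Int.ceil_lt_add_one (x/L2)
      calc (k:ℝ)*L2 < (x/L2 + 1)*L2 := by nlinarith
      _ = x + L2 := by field_simp
    have hk2 : (k:ℝ)*L2 + L2 ≤ x + h := by
      have h2L : 2*L2 ≤ h := by rw [hL16] at hLh; linarith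
      linarith
    have hlow : W (n+2) k ≤ f (x+h) - f x := by
      have e3 := grid_incr' (n+2) k
      rw [← hL2] at e3
      have m1 := f_mono hka
      have m2 := f_mono hk2
      rw [e3] at m2
      linarith
    set q := k / 16 with hq
    have hq16a : 16*q ≤ k := by omega
    have hq16b : k < 16*q + 16 := by omega
    have hqk : W (n+2) k = W n q * (w (k/4) * w k) := by
      show W n (k/4/4) * w (k/4) * w k = _
      have he : k/4/4 = q := by omega
      rw [he]; ring
    have hWk : (1/64) * W n q ≤ W (n+2) k := by
      rw [hqk]
      have hww : (1/8:ℝ)*(1/8) ≤ w (k/4) * w k :=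
        mul_le_mul (w_ge (k/4)) (w_ge k) (by norm_num) (le_of_lt (w_pos (k/4)))
      nlinarith [W_pos n q]
    have c1 : (q:ℝ)*L ≤ (k:ℝ)*L2 := by
      rw [hL16]
      have hc : (16*(q:ℝ)) ≤ (k:ℝ) := by exact_mod_cast hq16a
      nlinarith
    have c2 : (k:ℝ)*L2 < ((q:ℝ)+1)*L := by
      rw [hL16]
      have hc : (k:ℝ) < 16*(q:ℝ) + 16 := by exact_mod_cast hq16b
      nlinarith
    have hqle : q ≤ j1 := by
      by_contra hcon
      push_neg at hcon
      have hc : (j1:ℝ) + 1 ≤ (q:ℝ) := by exact_mod_cast hcon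
      have hc2 : ((j1:ℝ)+1)*L ≤ (q:ℝ)*L := by nlinarith
      have hc3 : (q:ℝ)*L ≤ x + h := by linarith
      linarith
    have hqge : j1 - 1 ≤ q := by
      by_contra hcon
      push_neg at hcon
      have hcon' : q + 1 ≤ j1 - 1 := by omega
      have hc : ((q:ℝ)+1) ≤ (j1:ℝ) - 1 := by exact_mod_cast hcon'
      have h5 : ((q:ℝ)+1)*L ≤ ((j1:ℝ)-1)*L := by nlinarith
      have h6 : x < ((q:ℝ)+1)*L := by linarith
      have h7 : ((j1:ℝ)-1)*L < x := by nlinarith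
      linarith
    have hWj1 : W n j1 ≤ 3 * W n q := by
      rcases eq_or_lt_of_le hqge with he | hlt
      · have hj : j1 = q + 1 := by omega
        rw [hj]
        exact W_adj_le n q
      · have hj : j1 = q := by omega
        rw [hj]
        linarith [W_pos n q]
    have hWj2 : W n (j1+1) ≤ 3 * W n j1 := W_adj_le n j1
    have hD : W (n+2) k ≤ f (x+h) - f x := hlow
    have hDpos : (0:ℝ) < f (x+h) - f x := lt_of_lt_of_le (W_pos (n+2) k) hD
    calc f (x+2*h) - f (x+h) ≤ W n j1 + W n (j1+1) := hup
    _ ≤ 4 * W n j1 := by linarith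
    _ ≤ 12 * W n q := by linarith
    _ = 768 * ((1/64) * W n q) := by ring
    _ ≤ 768 * W (n+2) k := by linarith
    _ ≤ 768 * (f (x+h) - f x) := by linarith
    _ ≤ 2304 * (f (x+h) - f x) := by linarith
  · have hfl : (1:ℤ) ≤ ⌊h⌋ := by exact_mod_cast Int.le_floor.mpr (by exact_mod_cast hbig)
    have hup : f (x+2*h) ≤ f (x+h) + ⌈h⌉ := by
      have hle : x + 2*h ≤ (x+h) + ⌈h⌉ := by linarith [Int.le_ceil h]
      have m := f_mono hle
      rw [f_int_add] at m
      exact m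
    have hlo : f x + ⌊h⌋ ≤ f (x+h) := by
      have hle : x + (⌊h⌋:ℝ) ≤ x + h := by linarith [Int.floor_le h]
      have m := f_mono hle
      rw [f_int_add] at m
      exact m
    have hcf : (⌈h⌉:ℝ) ≤ (⌊h⌋:ℝ) + 1 := by
      exact_mod_cast Int.ceil_le_floor_add_one h
    have hfl' : (1:ℝ) ≤ (⌊h⌋:ℝ) := by exact_mod_cast hfl
    linarith


lemma doubL (x h : ℝ) (h0 : 0 < h) :
    f x - f (x - h) ≤ 2304 * (f (x + h) - f x) := by
  have h1 := doubR (-x - h) h h0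
  have e1 : -x - h + 2*h = -(x - h) := by ring
  have e2 : -x - h + h = -x := by ring
  have e3 : -x - h = -(x+h) := by ring
  rw [e1, e2, e3, f_neg, f_neg, f_neg] at h1
  linarith

lemma Dpos (x s : ℝ) (hs : 0 < s) : 0 < f (x + s) - f x := by
  have := f_strictMono (show x < x + s by linarith)
  linarith

lemma decay (k : ℕ) (x s : ℝ) (hs : 0 < s) :
    2305^k * (f (x+s) - f x) ≤ 2304^k * (f (x + 2^k * s) - f x) := by
  induction k with
  | zero => simp
  | succ m ih =>
    set u : ℝ := 2^m * s with hu
    have hu0 : 0 < u := by positivity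
    have step : 2305 * (f (x+u) - f x) ≤ 2304 * (f (x + 2*u) - f x) := by
      have hd := doubL (x + u) u hu0
      have e1 : x + u - u = x := by ring
      have e2 : x + u + u = x + 2*u := by ring
      rw [e1, e2] at hd
      linarith
    have h2 : x + 2^(m+1)*s = x + 2*u := by rw [hu]; ring
    rw [h2]
    have hpos1 : (0:ℝ) < 2304^m := by positivity
    have hpos2 : (0:ℝ) < 2305 := by norm_num
    calc 2305^(m+1) * (f (x+s) - f x) = 2305 * (2305^m * (f (x+s) - f x)) := by ring
    _ ≤ 2305 * (2304^m * (f (x + u) - f x)) := by linarith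
    _ = 2304^m * (2305 * (f (x + u) - f x)) := by ring
    _ ≤ 2304^m * (2304 * (f (x + 2*u) - f x)) := by nlinarith [step, hpos1]
    _ = 2304^(m+1) * (f (x + 2*u) - f x) := by ring

lemma growth (k : ℕ) (x s : ℝ) (hs : 0 < s) :
    f (x + 2^k * s) - f x ≤ 2305^k * (f (x+s) - f x) := by
  induction k with
  | zero => simp
  | succ m ih =>
    set u : ℝ := 2^m * s with hu
    have hu0 : 0 < u := by positivity
    have step : f (x + 2*u) - f x ≤ 2305 * (f (x+u) - f x) := by
      have hd := doubR x u hu0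
      linarith
    have h2 : x + 2^(m+1)*s = x + 2*u := by rw [hu]; ring
    rw [h2]
    have hpos2 : (0:ℝ) < 2305^m := by positivity
    calc f (x + 2*u) - f x ≤ 2305 * (f (x+u) - f x) := step
    _ ≤ 2305 * (2305^m * (f (x+s) - f x)) := by linarith
    _ = 2305^(m+1) * (f (x+s) - f x) := by ring

/-- exponents for the quasisymmetry gauge -/
def ea : ℝ := Real.logb 2 (2305/2304)
def eb : ℝ := Real.logb 2 2305

lemma ea_pos : 0 < ea := Real.logb_pos (by norm_num) (by norm_num)
lemma eb_pos : 0 < eb := Real.logb_pos (by norm_num) (by norm_num)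

lemma two_rpow_ea : (2:ℝ) ^ ea = 2305/2304 :=
  Real.rpow_logb (by norm_num) (by norm_num) (by norm_num)
lemma two_rpow_eb : (2:ℝ) ^ eb = 2305 :=
  Real.rpow_logb (by norm_num) (by norm_num) (by norm_num)

lemma ratio_small (x s r : ℝ) (hs : 0 < s) (hsr : s ≤ r) :
    f (x+s) - f x ≤ 2 * (s/r) ^ ea * (f (x+r) - f x) := by
  have hr : 0 < r := lt_of_lt_of_le hs hsr
  set k := ⌊Real.logb 2 (r/s)⌋₊ with hk
  have hrs1 : 1 ≤ r/s := (one_le_div hs).mpr hsr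
  have hlogb0 : 0 ≤ Real.logb 2 (r/s) := Real.logb_nonneg (by norm_num) hrs1
  have hk1 : (2:ℝ)^(k:ℝ) ≤ r/s := by
    calc (2:ℝ)^(k:ℝ) ≤ (2:ℝ)^(Real.logb 2 (r/s)) :=
          Real.rpow_le_rpow_of_exponent_le (by norm_num) (Nat.floor_le hlogb0)
    _ = r/s := Real.rpow_logb (by norm_num) (by norm_num) (by positivity)
  have hk2 : r/s < (2:ℝ)^((k:ℝ)+1) := by
    calc r/s = (2:ℝ)^(Real.logb 2 (r/s)) :=
          (Real.rpow_logb (by norm_num) (by norm_num) (by positivity)).symm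
    _ < (2:ℝ)^((k:ℝ)+1) :=
          Real.rpow_lt_rpow_of_exponent_lt (by norm_num) (Nat.lt_floor_add_one _)
  have hnat : (2:ℝ)^(k:ℝ) = (2:ℝ)^(k:ℕ) := Real.rpow_natCast 2 k
  have h2k : (2:ℝ)^(k:ℕ) * s ≤ r := by
    rw [← hnat]
    rw [le_div_iff₀ hs] at hk1
    linarith
  have hdec := decay k x s hs
  have hmono : f (x + 2^k * s) ≤ f (x + r) := f_mono (by linarith)
  have hD2 : 0 < f (x + 2^k*s) - f x := Dpos x _ (by positivity)
  have hDr : 0 < f (x + r) - f x := Dpos x r hr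
  have hDs : 0 < f (x + s) - f x := Dpos x s hs
  -- D(s) ≤ (2304/2305)^k D(r)
  have hstep : (f (x+s) - f x) ≤ (2304/2305)^k * (f (x+r) - f x) := by
    have hp : (0:ℝ) < 2305^k := by positivity
    rw [div_pow, div_mul_eq_mul_div, le_div_iff₀ hp]
    calc (f (x+s) - f x) * 2305^k = 2305^k * (f (x+s) - f x) := by ring
    _ ≤ 2304^k * (f (x + 2^k*s) - f x) := hdec
    _ ≤ 2304^k * (f (x+r) - f x) := by
          have : (0:ℝ) < 2304^k := by positivity
          nlinarith [hmono]
  -- (2304/2305)^k ≤ 2 * (s/r)^ea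
  have hthetak : ((2304:ℝ)/2305)^k ≤ 2 * (s/r) ^ ea := by
    have htheta : (2304:ℝ)/2305 = (2:ℝ)^(-ea) := by
      rw [Real.rpow_neg (by norm_num), two_rpow_ea]
      norm_num
    have hsr' : (2:ℝ)^(-((k:ℝ)+1)) < s/r := by
      rw [Real.rpow_neg (by norm_num)]
      rw [show s/r = (r/s)⁻¹ by field_simp]
      apply inv_strictAnti₀ (by positivity) hk2
    have hpow : ((2:ℝ)^(-((k:ℝ)+1)))^ea ≤ (s/r)^ea :=
      Real.rpow_le_rpow (by positivity) (le_of_lt hsr') (le_of_lt ea_pos)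
    have hcomp : ((2:ℝ)^(-((k:ℝ)+1)))^ea = (2:ℝ)^(-ea) * ((2:ℝ)^(-ea))^(k:ℕ) := by
      rw [← Real.rpow_natCast ((2:ℝ)^(-ea)) k, ← Real.rpow_mul (by norm_num : (0:ℝ) ≤ 2),
          ← Real.rpow_mul (by norm_num : (0:ℝ) ≤ 2), ← Real.rpow_add (by norm_num : (0:ℝ) < 2)]
      congr 1
      ring
    rw [htheta]
    have h1 : ((2:ℝ)^(-ea))^(k:ℕ) = (2:ℝ)^(-ea) * ((2:ℝ)^(-ea))^(k:ℕ) / ((2:ℝ)^(-ea)) := by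
      field_simp
    rw [h1, ← hcomp]
    rw [div_le_iff₀ (by positivity)]
    calc ((2:ℝ)^(-((k:ℝ)+1)))^ea ≤ (s/r)^ea := hpow
    _ ≤ 2 * (s/r)^ea * (2:ℝ)^(-ea) := by
          have hrp : (0:ℝ) < (s/r)^ea := Real.rpow_pos_of_pos (by positivity) ea
          have h2 : (1:ℝ)/2 ≤ (2:ℝ)^(-ea) := by
            rw [Real.rpow_neg (by norm_num), two_rpow_ea]
            norm_num
          nlinarith
  calc f (x+s) - f x ≤ (2304/2305)^k * (f (x+r) - f x) := hstep
  _ ≤ 2 * (s/r)^ea * (f (x+r) - f x) := by nlinarith [hthetak, hDr]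

lemma ratio_large (x s r : ℝ) (hr : 0 < r) (hrs : r ≤ s) :
    f (x+s) - f x ≤ 2305 * (s/r) ^ eb * (f (x+r) - f x) := by
  have hs : 0 < s := lt_of_lt_of_le hr hrs
  set k := ⌊Real.logb 2 (s/r)⌋₊ + 1 with hk
  have hsr1 : 1 ≤ s/r := (one_le_div hr).mpr hrs
  have hlogb0 : 0 ≤ Real.logb 2 (s/r) := Real.logb_nonneg (by norm_num) hsr1
  have hk2 : s/r < (2:ℝ)^(k:ℝ) := by
    calc s/r = (2:ℝ)^(Real.logb 2 (s/r)) :=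
          (Real.rpow_logb (by norm_num) (by norm_num) (by positivity)).symm
    _ < (2:ℝ)^(k:ℝ) := by
          apply Real.rpow_lt_rpow_of_exponent_lt (by norm_num)
          rw [hk]
          push_cast
          exact Nat.lt_floor_add_one _
  have hnat : (2:ℝ)^(k:ℝ) = (2:ℝ)^(k:ℕ) := Real.rpow_natCast 2 k
  have hs2k : s ≤ 2^(k:ℕ) * r := by
    rw [← hnat]
    rw [div_lt_iff₀ hr] at hk2
    linarith
  have hgro := growth k x r hr
  have hmono : f (x + s) ≤ f (x + 2^k * r) := f_mono (by linarith)
  have hDr : 0 < f (x + r) - f x := Dpos x r hr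
  have hstep : f (x+s) - f x ≤ 2305^k * (f (x+r) - f x) := by
    calc f (x+s) - f x ≤ f (x + 2^k*r) - f x := by linarith
    _ ≤ 2305^k * (f (x+r) - f x) := hgro
  have hbk : (2305:ℝ)^(k:ℕ) ≤ 2305 * (s/r)^eb := by
    have h2305 : (2305:ℝ) = (2:ℝ)^eb := two_rpow_eb.symm
    have h1 : ((2305:ℝ))^(k:ℕ) = (2:ℝ)^(eb*(k:ℝ)) := by
      rw [h2305, ← Real.rpow_natCast ((2:ℝ)^eb) k, ← Real.rpow_mul (by norm_num : (0:ℝ) ≤ 2)]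
    have h2 : (k:ℝ) ≤ Real.logb 2 (s/r) + 1 := by
      rw [hk]
      push_cast
      linarith [Nat.floor_le hlogb0]
    have h3 : (2:ℝ)^(eb*(k:ℝ)) ≤ (2:ℝ)^(eb*(Real.logb 2 (s/r) + 1)) := by
      apply Real.rpow_le_rpow_of_exponent_le (by norm_num)
      nlinarith [eb_pos]
    have h4 : (2:ℝ)^(eb*(Real.logb 2 (s/r) + 1)) = (s/r)^eb * 2305 := by
      rw [show eb*(Real.logb 2 (s/r) + 1) = Real.logb 2 (s/r) * eb + eb by ring,
          Real.rpow_add (by norm_num : (0:ℝ) < 2),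
          Real.rpow_mul (by norm_num : (0:ℝ) ≤ 2), two_rpow_eb,
          Real.rpow_logb (by norm_num) (by norm_num) (by positivity)]
    rw [h1]
    calc (2:ℝ)^(eb*(k:ℝ)) ≤ (2:ℝ)^(eb*(Real.logb 2 (s/r) + 1)) := h3
    _ = (s/r)^eb * 2305 := h4
    _ = 2305 * (s/r)^eb := by ring
  calc f (x+s) - f x ≤ 2305^k * (f (x+r) - f x) := hstep
  _ ≤ 2305 * (s/r)^eb * (f (x+r) - f x) := by nlinarith [hbk, hDr]


/-- the quasisymmetry gauge -/
def eta (t : ℝ) : ℝ :=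
  if t ≤ 1 then (2304^2*2305) * t ^ ea else (2304^2*2305) * t ^ eb

lemma eta_pos {t : ℝ} (ht : 0 < t) : 0 < eta t := by
  unfold eta
  split <;> positivity

lemma eta_strictMono : StrictMonoOn eta (Ioi 0) := by
  intro t1 ht1 t2 ht2 h12
  simp only [mem_Ioi] at ht1 ht2
  unfold eta
  rcases le_or_gt t1 1 with h1 | h1 <;> rcases le_or_gt t2 1 with h2 | h2
  · rw [if_pos h1, if_pos h2]
    have := Real.rpow_lt_rpow (le_of_lt ht1) h12 ea_pos
    nlinarith
  · rw [if_pos h1, if_neg (not_le.mpr h2)]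
    have ha : t1 ^ ea ≤ 1 := Real.rpow_le_one (le_of_lt ht1) h1 (le_of_lt ea_pos)
    have hb : 1 < t2 ^ eb := Real.one_lt_rpow_iff_of_pos ht2 |>.mpr (Or.inl ⟨h2, eb_pos⟩)
    nlinarith
  · linarith
  · rw [if_neg (not_le.mpr h1), if_neg (not_le.mpr h2)]
    have := Real.rpow_lt_rpow (le_of_lt ht1) h12 eb_pos
    nlinarith

lemma eta_bijOn : BijOn eta (Ioi 0) (Ioi 0) := by
  refine ⟨fun t ht => eta_pos ht, eta_strictMono.injOn, fun y hy => ?_⟩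
  simp only [mem_Ioi] at hy
  set A : ℝ := 2304^2*2305 with hA
  have hApos : (0:ℝ) < A := by norm_num
  rcases le_or_gt y A with hyA | hyA
  · refine ⟨(y/A) ^ ea⁻¹, ?_, ?_⟩
    · simp only [mem_Ioi]
      positivity
    · have h1 : (y/A) ^ ea⁻¹ ≤ 1 :=
        Real.rpow_le_one (by positivity) (by rw [div_le_one hApos]; exact hyA)
          (le_of_lt (inv_pos.mpr ea_pos))
      unfold eta
      rw [if_pos h1, ← Real.rpow_mul (by positivity), inv_mul_cancel₀ (ne_of_gt ea_pos),
          Real.rpow_one]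
      field_simp
      exact hA.symm
  · refine ⟨(y/A) ^ eb⁻¹, ?_, ?_⟩
    · simp only [mem_Ioi]
      positivity
    · have hgt : 1 < (y/A) ^ eb⁻¹ := by
        apply (Real.one_lt_rpow_iff_of_pos (by positivity)).mpr
        left
        exact ⟨by rw [lt_div_iff₀ hApos]; linarith, inv_pos.mpr eb_pos⟩
      unfold eta
      rw [if_neg (not_le.mpr hgt), ← Real.rpow_mul (by positivity),
          inv_mul_cancel₀ (ne_of_gt eb_pos), Real.rpow_one]
      field_simp
      exact hA.symm

lemma f_qs (x y z : ℝ) (hxy : x ≠ y) (hxz : x ≠ z) :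
    |f x - f y| ≤ eta (|x-y|/|x-z|) * |f x - f z| := by
  set s := |x - y| with hs
  set r := |x - z| with hr
  have hs0 : 0 < s := abs_pos.mpr (sub_ne_zero.mpr hxy)
  have hr0 : 0 < r := abs_pos.mpr (sub_ne_zero.mpr hxz)
  have hDs : 0 < f (x+s) - f x := Dpos x s hs0
  have hDr : 0 < f (x+r) - f x := Dpos x r hr0
  -- step 1
  have step1 : |f x - f y| ≤ 2304 * (f (x+s) - f x) := by
    rcases lt_or_gt_of_ne hxy with h | h
    · -- x < y, y = x + s
      have hy : y = x + s := by rw [hs, abs_of_neg (by linarith : x - y < 0)]; ring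
      rw [hy, abs_sub_comm, abs_of_nonneg (by linarith : (0:ℝ) ≤ f (x+s) - f x)]
      linarith
    · -- y < x, y = x - s
      have hy : y = x - s := by rw [hs, abs_of_pos (by linarith : (0:ℝ) < x - y)]; ring
      have hd := doubL x s hs0
      rw [hy, abs_of_nonneg (by linarith [f_mono (by linarith : x - s ≤ x)] : (0:ℝ) ≤ f x - f (x-s))]
      linarith
  -- step 2
  have step2 : f (x+r) - f x ≤ 2304 * |f x - f z| := by
    rcases lt_or_gt_of_ne hxz with h | h
    · have hz : z = x + r := by rw [hr, abs_of_neg (by linarith : x - z < 0)]; ring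
      rw [hz, abs_sub_comm, abs_of_nonneg (by linarith : (0:ℝ) ≤ f (x+r) - f x)]
      linarith
    · have hz : z = x - r := by rw [hr, abs_of_pos (by linarith : (0:ℝ) < x - z)]; ring
      have hd := doubR (x - r) r hr0
      have e1 : x - r + 2*r = x + r := by ring
      have e2 : x - r + r = x := by ring
      rw [e1, e2] at hd
      rw [hz, abs_of_nonneg (by linarith [f_mono (by linarith : x - r ≤ x)] : (0:ℝ) ≤ f x - f (x-r))]
      linarith
  -- step 3
  have step3 : f (x+s) - f x ≤
      (if s/r ≤ 1 then 2 * (s/r)^ea else 2305 * (s/r)^eb) * (f (x+r) - f x) := by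
    rcases le_or_gt (s/r) 1 with h | h
    · rw [if_pos h]
      exact ratio_small x s r hs0 ((div_le_one hr0).mp h)
    · rw [if_neg (not_le.mpr h)]
      exact ratio_large x s r hr0 (le_of_lt ((one_lt_div hr0).mp h))
  have hetaval : eta (s/r) = if s/r ≤ 1 then (2304^2*2305) * (s/r) ^ ea
      else (2304^2*2305) * (s/r) ^ eb := rfl
  have hfz : 0 < |f x - f z| := by
    rcases lt_or_gt_of_ne hxz with h | h
    · have := f_strictMono h
      rw [abs_sub_comm]
      exact abs_pos.mpr (by linarith)
    · have := f_strictMono h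
      exact abs_pos.mpr (by linarith)
  rcases le_or_gt (s/r) 1 with hc | hc
  · rw [hetaval, if_pos hc]
    rw [if_pos hc] at step3
    have hrp : (0:ℝ) < (s/r)^ea := Real.rpow_pos_of_pos (by positivity) ea
    calc |f x - f y| ≤ 2304 * (f (x+s) - f x) := step1
    _ ≤ 2304 * (2 * (s/r)^ea * (f (x+r) - f x)) := by nlinarith
    _ ≤ 2304 * (2 * (s/r)^ea * (2304 * |f x - f z|)) := by nlinarith
    _ = (2304^2*2) * (s/r)^ea * |f x - f z| := by ring
    _ ≤ (2304^2*2305) * (s/r)^ea * |f x - f z| := by nlinarith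
  · rw [hetaval, if_neg (not_le.mpr hc)]
    rw [if_neg (not_le.mpr hc)] at step3
    have hrp : (0:ℝ) < (s/r)^eb := Real.rpow_pos_of_pos (by positivity) eb
    calc |f x - f y| ≤ 2304 * (f (x+s) - f x) := step1
    _ ≤ 2304 * (2305 * (s/r)^eb * (f (x+r) - f x)) := by nlinarith
    _ ≤ 2304 * (2305 * (s/r)^eb * (2304 * |f x - f z|)) := by nlinarith
    _ = (2304^2*2305) * (s/r)^eb * |f x - f z| := by ring


/-- moments of `f` against monomials -/
def J (k : ℕ) : ℝ := ∫ s in (0:ℝ)..1, f s * s^k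

lemma quarter (g : ℝ → ℝ) (hg : Continuous g) :
    ∫ x in (0:ℝ)..1, g x =
      (1/4) * ((∫ s in (0:ℝ)..1, g ((s+0)/4)) + (∫ s in (0:ℝ)..1, g ((s+1)/4))
        + (∫ s in (0:ℝ)..1, g ((s+2)/4)) + (∫ s in (0:ℝ)..1, g ((s+3)/4))) := by
  have comp : ∀ r : ℝ, ∫ s in (0:ℝ)..1, g ((s+r)/4) = 4 * ∫ x in (r/4)..(1/4+r/4), g x := by
    intro r
    have h := intervalIntegral.integral_comp_mul_add (a := 0) (b := 1) g
      (show (1/4:ℝ) ≠ 0 by norm_num) (r/4)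
    have he : (fun s : ℝ => g ((s+r)/4)) = fun x : ℝ => g (1/4*x + r/4) :=
      funext fun s => congrArg g (by ring)
    rw [he, h]
    norm_num
  have i1 : IntervalIntegrable g volume 0 (1/4) := hg.intervalIntegrable _ _
  have i2 : IntervalIntegrable g volume (1/4) (1/2) := hg.intervalIntegrable _ _
  have i3 : IntervalIntegrable g volume (1/2) (3/4) := hg.intervalIntegrable _ _
  have i4 : IntervalIntegrable g volume (3/4) 1 := hg.intervalIntegrable _ _
  have hsplit : ∫ x in (0:ℝ)..1, g x = (∫ x in (0:ℝ)..(1/4), g x) + (∫ x in (1/4:ℝ)..(1/2), g x)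
      + (∫ x in (1/2:ℝ)..(3/4), g x) + (∫ x in (3/4:ℝ)..1, g x) := by
    rw [intervalIntegral.integral_add_adjacent_intervals i1 i2,
        intervalIntegral.integral_add_adjacent_intervals (i1.trans i2) i3,
        intervalIntegral.integral_add_adjacent_intervals ((i1.trans i2).trans i3) i4]
  have c0 : ∫ s in (0:ℝ)..1, g ((s+0)/4) = 4 * ∫ x in (0:ℝ)..(1/4), g x := by
    convert comp 0 using 3 <;> norm_num
  have c1 : ∫ s in (0:ℝ)..1, g ((s+1)/4) = 4 * ∫ x in (1/4:ℝ)..(1/2), g x := by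
    convert comp 1 using 3 <;> norm_num
  have c2 : ∫ s in (0:ℝ)..1, g ((s+2)/4) = 4 * ∫ x in (1/2:ℝ)..(3/4), g x := by
    convert comp 2 using 3 <;> norm_num
  have c3 : ∫ s in (0:ℝ)..1, g ((s+3)/4) = 4 * ∫ x in (3/4:ℝ)..1, g x := by
    convert comp 3 using 3 <;> norm_num
  rw [hsplit, c0, c1, c2, c3]
  ring

lemma f_q0 {t : ℝ} (ht : t ∈ Icc (0:ℝ) 1) : f ((t+0)/4) = 0 + 1/8 * f t := by
  have h := f_quarter 0 ht
  rw [show (t+0)/4 = (((0:ℤ):ℝ) + t)/4 by push_cast; ring, h]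
  norm_num [cc_zero, w, show ((0:ℤ) % 4 = 0) by decide]

lemma f_q1 {t : ℝ} (ht : t ∈ Icc (0:ℝ) 1) : f ((t+1)/4) = 1/8 + 3/8 * f t := by
  have h := f_quarter 1 ht
  rw [show (t+1)/4 = (((1:ℤ):ℝ) + t)/4 by push_cast; ring, h]
  norm_num [cc, S, w, show ((1:ℤ) % 4 = 1) by decide, show ((1:ℤ)/4 = 0) by decide]

lemma f_q2 {t : ℝ} (ht : t ∈ Icc (0:ℝ) 1) : f ((t+2)/4) = 1/2 + 3/8 * f t := by
  have h := f_quarter 2 ht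
  rw [show (t+2)/4 = (((2:ℤ):ℝ) + t)/4 by push_cast; ring, h]
  norm_num [cc, S, w, show ((2:ℤ) % 4 = 2) by decide, show ((2:ℤ)/4 = 0) by decide]

lemma f_q3 {t : ℝ} (ht : t ∈ Icc (0:ℝ) 1) : f ((t+3)/4) = 7/8 + 1/8 * f t := by
  have h := f_quarter 3 ht
  rw [show (t+3)/4 = (((3:ℤ):ℝ) + t)/4 by push_cast; ring, h]
  norm_num [cc, S, w, show ((3:ℤ) % 4 = 3) by decide, show ((3:ℤ)/4 = 0) by decide]


lemma contf_pow (k : ℕ) : Continuous (fun s : ℝ => f s * s^k) := f_cont.mul (continuous_pow k)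

lemma J_zero_eq : J 0 = ∫ s in (0:ℝ)..1, f s := by
  unfold J
  congr 1
  funext s
  simp

lemma im (c : ℝ) (k : ℕ) : ∫ s in (0:ℝ)..1, c * s^k = c/(k+1) := by
  rw [intervalIntegral.integral_const_mul, integral_pow]
  norm_num
  exact (div_eq_mul_inv c _).symm

lemma imf (d : ℝ) (k : ℕ) : ∫ s in (0:ℝ)..1, d * (f s * s^k) = d * J k := by
  rw [intervalIntegral.integral_const_mul]
  rfl

lemma iic (c : ℝ) (k : ℕ) : IntervalIntegrable (fun s : ℝ => c * s^k) volume 0 1 :=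
  (continuous_const.mul (continuous_pow k)).intervalIntegrable 0 1

lemma iif (d : ℝ) (k : ℕ) : IntervalIntegrable (fun s : ℝ => d * (f s * s^k)) volume 0 1 :=
  (continuous_const.mul (contf_pow k)).intervalIntegrable 0 1

lemma poly_f_integral (c0 c1 c2 c3 c4 d0 d1 d2 d3 : ℝ) :
    ∫ s in (0:ℝ)..1, ((c0*s^0 + c1*s^1 + c2*s^2 + c3*s^3 + c4*s^4)
        + (d0*(f s * s^0) + d1*(f s * s^1) + d2*(f s * s^2) + d3*(f s * s^3)))
    = c0 + c1/2 + c2/3 + c3/4 + c4/5 + d0*J 0 + d1*J 1 + d2*J 2 + d3*J 3 := by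
  rw [intervalIntegral.integral_add
        (((((iic c0 0).add (iic c1 1)).add (iic c2 2)).add (iic c3 3)).add (iic c4 4))
        ((((iif d0 0).add (iif d1 1)).add (iif d2 2)).add (iif d3 3)),
      intervalIntegral.integral_add
        ((((iic c0 0).add (iic c1 1)).add (iic c2 2)).add (iic c3 3)) (iic c4 4),
      intervalIntegral.integral_add
        (((iic c0 0).add (iic c1 1)).add (iic c2 2)) (iic c3 3),
      intervalIntegral.integral_add
        ((iic c0 0).add (iic c1 1)) (iic c2 2),
      intervalIntegral.integral_add (iic c0 0) (iic c1 1),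
      intervalIntegral.integral_add
        (((iif d0 0).add (iif d1 1)).add (iif d2 2)) (iif d3 3),
      intervalIntegral.integral_add
        ((iif d0 0).add (iif d1 1)) (iif d2 2),
      intervalIntegral.integral_add (iif d0 0) (iif d1 1),
      im c0 0, im c1 1, im c2 2, im c3 3, im c4 4, imf d0 0, imf d1 1, imf d2 2, imf d3 3]
  norm_num
  ring

lemma iip (c : ℝ) (k : ℕ) : IntervalIntegrable (fun s : ℝ => c * s^k) volume 0 1 := iic c k

lemma poly_integral6 (c0 c1 c2 c3 c4 c5 c6 : ℝ) :
    ∫ s in (0:ℝ)..1, (c0*s^0 + c1*s^1 + c2*s^2 + c3*s^3 + c4*s^4 + c5*s^5 + c6*s^6)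
    = c0 + c1/2 + c2/3 + c3/4 + c4/5 + c5/6 + c6/7 := by
  rw [intervalIntegral.integral_add
        ((((((iic c0 0).add (iic c1 1)).add (iic c2 2)).add (iic c3 3)).add (iic c4 4)).add (iic c5 5)) (iic c6 6),
      intervalIntegral.integral_add
        (((((iic c0 0).add (iic c1 1)).add (iic c2 2)).add (iic c3 3)).add (iic c4 4)) (iic c5 5),
      intervalIntegral.integral_add
        ((((iic c0 0).add (iic c1 1)).add (iic c2 2)).add (iic c3 3)) (iic c4 4),
      intervalIntegral.integral_add
        (((iic c0 0).add (iic c1 1)).add (iic c2 2)) (iic c3 3),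
      intervalIntegral.integral_add
        ((iic c0 0).add (iic c1 1)) (iic c2 2),
      intervalIntegral.integral_add (iic c0 0) (iic c1 1),
      im c0 0, im c1 1, im c2 2, im c3 3, im c4 4, im c5 5, im c6 6]
  norm_num

lemma J0val : J 0 = ((1:ℝ)/2) := by
  have hq := quarter (fun x : ℝ => f x * x^0) (contf_pow 0)
  have hA0 : (∫ s in (0:ℝ)..1, (fun x : ℝ => f x * x^0) ((s+0)/4)) = (0:ℝ) + ((1:ℝ)/8)*J 0 + (0:ℝ)*J 1 + (0:ℝ)*J 2 + (0:ℝ)*J 3 := by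
    have hcongr : (∫ s in (0:ℝ)..1, (fun x : ℝ => f x * x^0) ((s+0)/4))
        = ∫ s in (0:ℝ)..1, ((0:ℝ) + ((1:ℝ)/8) * f s) * ((s+0)/4)^0 := by
      apply intervalIntegral.integral_congr
      intro s hs
      rw [Set.uIcc_of_le (by norm_num : (0:ℝ) ≤ 1)] at hs
      show f ((s+0)/4) * ((s+0)/4)^0 = _
      rw [f_q0 hs]
    rw [hcongr,
        show (fun s : ℝ => ((0:ℝ) + ((1:ℝ)/8) * f s) * ((s+0)/4)^0)
          = (fun s : ℝ => (((0:ℝ)*s^0 + (0:ℝ)*s^1 + (0:ℝ)*s^2 + (0:ℝ)*s^3 + (0:ℝ)*s^4)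
            + (((1:ℝ)/8)*(f s * s^0) + (0:ℝ)*(f s * s^1) + (0:ℝ)*(f s * s^2) + (0:ℝ)*(f s * s^3))))
          from funext fun s => by ring,
        poly_f_integral]
    norm_num
  have hA1 : (∫ s in (0:ℝ)..1, (fun x : ℝ => f x * x^0) ((s+1)/4)) = ((1:ℝ)/8) + ((3:ℝ)/8)*J 0 + (0:ℝ)*J 1 + (0:ℝ)*J 2 + (0:ℝ)*J 3 := by
    have hcongr : (∫ s in (0:ℝ)..1, (fun x : ℝ => f x * x^0) ((s+1)/4))
        = ∫ s in (0:ℝ)..1, (((1:ℝ)/8) + ((3:ℝ)/8) * f s) * ((s+1)/4)^0 := by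
      apply intervalIntegral.integral_congr
      intro s hs
      rw [Set.uIcc_of_le (by norm_num : (0:ℝ) ≤ 1)] at hs
      show f ((s+1)/4) * ((s+1)/4)^0 = _
      rw [f_q1 hs]
    rw [hcongr,
        show (fun s : ℝ => (((1:ℝ)/8) + ((3:ℝ)/8) * f s) * ((s+1)/4)^0)
          = (fun s : ℝ => ((((1:ℝ)/8)*s^0 + (0:ℝ)*s^1 + (0:ℝ)*s^2 + (0:ℝ)*s^3 + (0:ℝ)*s^4)
            + (((3:ℝ)/8)*(f s * s^0) + (0:ℝ)*(f s * s^1) + (0:ℝ)*(f s * s^2) + (0:ℝ)*(f s * s^3))))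
          from funext fun s => by ring,
        poly_f_integral]
    norm_num
  have hA2 : (∫ s in (0:ℝ)..1, (fun x : ℝ => f x * x^0) ((s+2)/4)) = ((1:ℝ)/2) + ((3:ℝ)/8)*J 0 + (0:ℝ)*J 1 + (0:ℝ)*J 2 + (0:ℝ)*J 3 := by
    have hcongr : (∫ s in (0:ℝ)..1, (fun x : ℝ => f x * x^0) ((s+2)/4))
        = ∫ s in (0:ℝ)..1, (((1:ℝ)/2) + ((3:ℝ)/8) * f s) * ((s+2)/4)^0 := by
      apply intervalIntegral.integral_congr
      intro s hs
      rw [Set.uIcc_of_le (by norm_num : (0:ℝ) ≤ 1)] at hs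
      show f ((s+2)/4) * ((s+2)/4)^0 = _
      rw [f_q2 hs]
    rw [hcongr,
        show (fun s : ℝ => (((1:ℝ)/2) + ((3:ℝ)/8) * f s) * ((s+2)/4)^0)
          = (fun s : ℝ => ((((1:ℝ)/2)*s^0 + (0:ℝ)*s^1 + (0:ℝ)*s^2 + (0:ℝ)*s^3 + (0:ℝ)*s^4)
            + (((3:ℝ)/8)*(f s * s^0) + (0:ℝ)*(f s * s^1) + (0:ℝ)*(f s * s^2) + (0:ℝ)*(f s * s^3))))
          from funext fun s => by ring,
        poly_f_integral]
    norm_num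
  have hA3 : (∫ s in (0:ℝ)..1, (fun x : ℝ => f x * x^0) ((s+3)/4)) = ((7:ℝ)/8) + ((1:ℝ)/8)*J 0 + (0:ℝ)*J 1 + (0:ℝ)*J 2 + (0:ℝ)*J 3 := by
    have hcongr : (∫ s in (0:ℝ)..1, (fun x : ℝ => f x * x^0) ((s+3)/4))
        = ∫ s in (0:ℝ)..1, (((7:ℝ)/8) + ((1:ℝ)/8) * f s) * ((s+3)/4)^0 := by
      apply intervalIntegral.integral_congr
      intro s hs
      rw [Set.uIcc_of_le (by norm_num : (0:ℝ) ≤ 1)] at hs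
      show f ((s+3)/4) * ((s+3)/4)^0 = _
      rw [f_q3 hs]
    rw [hcongr,
        show (fun s : ℝ => (((7:ℝ)/8) + ((1:ℝ)/8) * f s) * ((s+3)/4)^0)
          = (fun s : ℝ => ((((7:ℝ)/8)*s^0 + (0:ℝ)*s^1 + (0:ℝ)*s^2 + (0:ℝ)*s^3 + (0:ℝ)*s^4)
            + (((1:ℝ)/8)*(f s * s^0) + (0:ℝ)*(f s * s^1) + (0:ℝ)*(f s * s^2) + (0:ℝ)*(f s * s^3))))
          from funext fun s => by ring,
        poly_f_integral]
    norm_num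
  rw [hA0, hA1, hA2, hA3] at hq
  have hJ : J 0 = ∫ x in (0:ℝ)..1, (fun x : ℝ => f x * x^0) x := rfl
  have heq := hJ.trans hq
  linarith [heq]

lemma J1val : J 1 = ((7:ℝ)/20) := by
  have hq := quarter (fun x : ℝ => f x * x^1) (contf_pow 1)
  have hA0 : (∫ s in (0:ℝ)..1, (fun x : ℝ => f x * x^1) ((s+0)/4)) = (0:ℝ) + (0:ℝ)*J 0 + ((1:ℝ)/32)*J 1 + (0:ℝ)*J 2 + (0:ℝ)*J 3 := by
    have hcongr : (∫ s in (0:ℝ)..1, (fun x : ℝ => f x * x^1) ((s+0)/4))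
        = ∫ s in (0:ℝ)..1, ((0:ℝ) + ((1:ℝ)/8) * f s) * ((s+0)/4)^1 := by
      apply intervalIntegral.integral_congr
      intro s hs
      rw [Set.uIcc_of_le (by norm_num : (0:ℝ) ≤ 1)] at hs
      show f ((s+0)/4) * ((s+0)/4)^1 = _
      rw [f_q0 hs]
    rw [hcongr,
        show (fun s : ℝ => ((0:ℝ) + ((1:ℝ)/8) * f s) * ((s+0)/4)^1)
          = (fun s : ℝ => (((0:ℝ)*s^0 + (0:ℝ)*s^1 + (0:ℝ)*s^2 + (0:ℝ)*s^3 + (0:ℝ)*s^4)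
            + ((0:ℝ)*(f s * s^0) + ((1:ℝ)/32)*(f s * s^1) + (0:ℝ)*(f s * s^2) + (0:ℝ)*(f s * s^3))))
          from funext fun s => by ring,
        poly_f_integral]
    norm_num
  have hA1 : (∫ s in (0:ℝ)..1, (fun x : ℝ => f x * x^1) ((s+1)/4)) = ((3:ℝ)/64) + ((3:ℝ)/32)*J 0 + ((3:ℝ)/32)*J 1 + (0:ℝ)*J 2 + (0:ℝ)*J 3 := by
    have hcongr : (∫ s in (0:ℝ)..1, (fun x : ℝ => f x * x^1) ((s+1)/4))
        = ∫ s in (0:ℝ)..1, (((1:ℝ)/8) + ((3:ℝ)/8) * f s) * ((s+1)/4)^1 := by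
      apply intervalIntegral.integral_congr
      intro s hs
      rw [Set.uIcc_of_le (by norm_num : (0:ℝ) ≤ 1)] at hs
      show f ((s+1)/4) * ((s+1)/4)^1 = _
      rw [f_q1 hs]
    rw [hcongr,
        show (fun s : ℝ => (((1:ℝ)/8) + ((3:ℝ)/8) * f s) * ((s+1)/4)^1)
          = (fun s : ℝ => ((((1:ℝ)/32)*s^0 + ((1:ℝ)/32)*s^1 + (0:ℝ)*s^2 + (0:ℝ)*s^3 + (0:ℝ)*s^4)
            + (((3:ℝ)/32)*(f s * s^0) + ((3:ℝ)/32)*(f s * s^1) + (0:ℝ)*(f s * s^2) + (0:ℝ)*(f s * s^3))))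
          from funext fun s => by ring,
        poly_f_integral]
    norm_num
  have hA2 : (∫ s in (0:ℝ)..1, (fun x : ℝ => f x * x^1) ((s+2)/4)) = ((5:ℝ)/16) + ((3:ℝ)/16)*J 0 + ((3:ℝ)/32)*J 1 + (0:ℝ)*J 2 + (0:ℝ)*J 3 := by
    have hcongr : (∫ s in (0:ℝ)..1, (fun x : ℝ => f x * x^1) ((s+2)/4))
        = ∫ s in (0:ℝ)..1, (((1:ℝ)/2) + ((3:ℝ)/8) * f s) * ((s+2)/4)^1 := by
      apply intervalIntegral.integral_congr
      intro s hs
      rw [Set.uIcc_of_le (by norm_num : (0:ℝ) ≤ 1)] at hs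
      show f ((s+2)/4) * ((s+2)/4)^1 = _
      rw [f_q2 hs]
    rw [hcongr,
        show (fun s : ℝ => (((1:ℝ)/2) + ((3:ℝ)/8) * f s) * ((s+2)/4)^1)
          = (fun s : ℝ => ((((1:ℝ)/4)*s^0 + ((1:ℝ)/8)*s^1 + (0:ℝ)*s^2 + (0:ℝ)*s^3 + (0:ℝ)*s^4)
            + (((3:ℝ)/16)*(f s * s^0) + ((3:ℝ)/32)*(f s * s^1) + (0:ℝ)*(f s * s^2) + (0:ℝ)*(f s * s^3))))
          from funext fun s => by ring,
        poly_f_integral]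
    norm_num
  have hA3 : (∫ s in (0:ℝ)..1, (fun x : ℝ => f x * x^1) ((s+3)/4)) = ((49:ℝ)/64) + ((3:ℝ)/32)*J 0 + ((1:ℝ)/32)*J 1 + (0:ℝ)*J 2 + (0:ℝ)*J 3 := by
    have hcongr : (∫ s in (0:ℝ)..1, (fun x : ℝ => f x * x^1) ((s+3)/4))
        = ∫ s in (0:ℝ)..1, (((7:ℝ)/8) + ((1:ℝ)/8) * f s) * ((s+3)/4)^1 := by
      apply intervalIntegral.integral_congr
      intro s hs
      rw [Set.uIcc_of_le (by norm_num : (0:ℝ) ≤ 1)] at hs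
      show f ((s+3)/4) * ((s+3)/4)^1 = _
      rw [f_q3 hs]
    rw [hcongr,
        show (fun s : ℝ => (((7:ℝ)/8) + ((1:ℝ)/8) * f s) * ((s+3)/4)^1)
          = (fun s : ℝ => ((((21:ℝ)/32)*s^0 + ((7:ℝ)/32)*s^1 + (0:ℝ)*s^2 + (0:ℝ)*s^3 + (0:ℝ)*s^4)
            + (((3:ℝ)/32)*(f s * s^0) + ((1:ℝ)/32)*(f s * s^1) + (0:ℝ)*(f s * s^2) + (0:ℝ)*(f s * s^3))))
          from funext fun s => by ring,
        poly_f_integral]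
    norm_num
  rw [hA0, hA1, hA2, hA3] at hq
  have hJ : J 1 = ∫ x in (0:ℝ)..1, (fun x : ℝ => f x * x^1) x := rfl
  have heq := hJ.trans hq
  linarith [heq, J0val]

lemma J2val : J 2 = ((4:ℝ)/15) := by
  have hq := quarter (fun x : ℝ => f x * x^2) (contf_pow 2)
  have hA0 : (∫ s in (0:ℝ)..1, (fun x : ℝ => f x * x^2) ((s+0)/4)) = (0:ℝ) + (0:ℝ)*J 0 + (0:ℝ)*J 1 + ((1:ℝ)/128)*J 2 + (0:ℝ)*J 3 := by
    have hcongr : (∫ s in (0:ℝ)..1, (fun x : ℝ => f x * x^2) ((s+0)/4))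
        = ∫ s in (0:ℝ)..1, ((0:ℝ) + ((1:ℝ)/8) * f s) * ((s+0)/4)^2 := by
      apply intervalIntegral.integral_congr
      intro s hs
      rw [Set.uIcc_of_le (by norm_num : (0:ℝ) ≤ 1)] at hs
      show f ((s+0)/4) * ((s+0)/4)^2 = _
      rw [f_q0 hs]
    rw [hcongr,
        show (fun s : ℝ => ((0:ℝ) + ((1:ℝ)/8) * f s) * ((s+0)/4)^2)
          = (fun s : ℝ => (((0:ℝ)*s^0 + (0:ℝ)*s^1 + (0:ℝ)*s^2 + (0:ℝ)*s^3 + (0:ℝ)*s^4)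
            + ((0:ℝ)*(f s * s^0) + (0:ℝ)*(f s * s^1) + ((1:ℝ)/128)*(f s * s^2) + (0:ℝ)*(f s * s^3))))
          from funext fun s => by ring,
        poly_f_integral]
    norm_num
  have hA1 : (∫ s in (0:ℝ)..1, (fun x : ℝ => f x * x^2) ((s+1)/4)) = ((7:ℝ)/384) + ((3:ℝ)/128)*J 0 + ((3:ℝ)/64)*J 1 + ((3:ℝ)/128)*J 2 + (0:ℝ)*J 3 := by
    have hcongr : (∫ s in (0:ℝ)..1, (fun x : ℝ => f x * x^2) ((s+1)/4))
        = ∫ s in (0:ℝ)..1, (((1:ℝ)/8) + ((3:ℝ)/8) * f s) * ((s+1)/4)^2 := by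
      apply intervalIntegral.integral_congr
      intro s hs
      rw [Set.uIcc_of_le (by norm_num : (0:ℝ) ≤ 1)] at hs
      show f ((s+1)/4) * ((s+1)/4)^2 = _
      rw [f_q1 hs]
    rw [hcongr,
        show (fun s : ℝ => (((1:ℝ)/8) + ((3:ℝ)/8) * f s) * ((s+1)/4)^2)
          = (fun s : ℝ => ((((1:ℝ)/128)*s^0 + ((1:ℝ)/64)*s^1 + ((1:ℝ)/128)*s^2 + (0:ℝ)*s^3 + (0:ℝ)*s^4)
            + (((3:ℝ)/128)*(f s * s^0) + ((3:ℝ)/64)*(f s * s^1) + ((3:ℝ)/128)*(f s * s^2) + (0:ℝ)*(f s * s^3))))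
          from funext fun s => by ring,
        poly_f_integral]
    norm_num
  have hA2 : (∫ s in (0:ℝ)..1, (fun x : ℝ => f x * x^2) ((s+2)/4)) = ((19:ℝ)/96) + ((3:ℝ)/32)*J 0 + ((3:ℝ)/32)*J 1 + ((3:ℝ)/128)*J 2 + (0:ℝ)*J 3 := by
    have hcongr : (∫ s in (0:ℝ)..1, (fun x : ℝ => f x * x^2) ((s+2)/4))
        = ∫ s in (0:ℝ)..1, (((1:ℝ)/2) + ((3:ℝ)/8) * f s) * ((s+2)/4)^2 := by
      apply intervalIntegral.integral_congr
      intro s hs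
      rw [Set.uIcc_of_le (by norm_num : (0:ℝ) ≤ 1)] at hs
      show f ((s+2)/4) * ((s+2)/4)^2 = _
      rw [f_q2 hs]
    rw [hcongr,
        show (fun s : ℝ => (((1:ℝ)/2) + ((3:ℝ)/8) * f s) * ((s+2)/4)^2)
          = (fun s : ℝ => ((((1:ℝ)/8)*s^0 + ((1:ℝ)/8)*s^1 + ((1:ℝ)/32)*s^2 + (0:ℝ)*s^3 + (0:ℝ)*s^4)
            + (((3:ℝ)/32)*(f s * s^0) + ((3:ℝ)/32)*(f s * s^1) + ((3:ℝ)/128)*(f s * s^2) + (0:ℝ)*(f s * s^3))))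
          from funext fun s => by ring,
        poly_f_integral]
    norm_num
  have hA3 : (∫ s in (0:ℝ)..1, (fun x : ℝ => f x * x^2) ((s+3)/4)) = ((259:ℝ)/384) + ((9:ℝ)/128)*J 0 + ((3:ℝ)/64)*J 1 + ((1:ℝ)/128)*J 2 + (0:ℝ)*J 3 := by
    have hcongr : (∫ s in (0:ℝ)..1, (fun x : ℝ => f x * x^2) ((s+3)/4))
        = ∫ s in (0:ℝ)..1, (((7:ℝ)/8) + ((1:ℝ)/8) * f s) * ((s+3)/4)^2 := by
      apply intervalIntegral.integral_congr
      intro s hs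
      rw [Set.uIcc_of_le (by norm_num : (0:ℝ) ≤ 1)] at hs
      show f ((s+3)/4) * ((s+3)/4)^2 = _
      rw [f_q3 hs]
    rw [hcongr,
        show (fun s : ℝ => (((7:ℝ)/8) + ((1:ℝ)/8) * f s) * ((s+3)/4)^2)
          = (fun s : ℝ => ((((63:ℝ)/128)*s^0 + ((21:ℝ)/64)*s^1 + ((7:ℝ)/128)*s^2 + (0:ℝ)*s^3 + (0:ℝ)*s^4)
            + (((9:ℝ)/128)*(f s * s^0) + ((3:ℝ)/64)*(f s * s^1) + ((1:ℝ)/128)*(f s * s^2) + (0:ℝ)*(f s * s^3))))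
          from funext fun s => by ring,
        poly_f_integral]
    norm_num
  rw [hA0, hA1, hA2, hA3] at hq
  have hJ : J 2 = ∫ x in (0:ℝ)..1, (fun x : ℝ => f x * x^2) x := rfl
  have heq := hJ.trans hq
  linarith [heq, J0val, J1val]

lemma J3val : J 3 = ((91:ℝ)/425) := by
  have hq := quarter (fun x : ℝ => f x * x^3) (contf_pow 3)
  have hA0 : (∫ s in (0:ℝ)..1, (fun x : ℝ => f x * x^3) ((s+0)/4)) = (0:ℝ) + (0:ℝ)*J 0 + (0:ℝ)*J 1 + (0:ℝ)*J 2 + ((1:ℝ)/512)*J 3 := by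
    have hcongr : (∫ s in (0:ℝ)..1, (fun x : ℝ => f x * x^3) ((s+0)/4))
        = ∫ s in (0:ℝ)..1, ((0:ℝ) + ((1:ℝ)/8) * f s) * ((s+0)/4)^3 := by
      apply intervalIntegral.integral_congr
      intro s hs
      rw [Set.uIcc_of_le (by norm_num : (0:ℝ) ≤ 1)] at hs
      show f ((s+0)/4) * ((s+0)/4)^3 = _
      rw [f_q0 hs]
    rw [hcongr,
        show (fun s : ℝ => ((0:ℝ) + ((1:ℝ)/8) * f s) * ((s+0)/4)^3)
          = (fun s : ℝ => (((0:ℝ)*s^0 + (0:ℝ)*s^1 + (0:ℝ)*s^2 + (0:ℝ)*s^3 + (0:ℝ)*s^4)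
            + ((0:ℝ)*(f s * s^0) + (0:ℝ)*(f s * s^1) + (0:ℝ)*(f s * s^2) + ((1:ℝ)/512)*(f s * s^3))))
          from funext fun s => by ring,
        poly_f_integral]
    norm_num
  have hA1 : (∫ s in (0:ℝ)..1, (fun x : ℝ => f x * x^3) ((s+1)/4)) = ((15:ℝ)/2048) + ((3:ℝ)/512)*J 0 + ((9:ℝ)/512)*J 1 + ((9:ℝ)/512)*J 2 + ((3:ℝ)/512)*J 3 := by
    have hcongr : (∫ s in (0:ℝ)..1, (fun x : ℝ => f x * x^3) ((s+1)/4))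
        = ∫ s in (0:ℝ)..1, (((1:ℝ)/8) + ((3:ℝ)/8) * f s) * ((s+1)/4)^3 := by
      apply intervalIntegral.integral_congr
      intro s hs
      rw [Set.uIcc_of_le (by norm_num : (0:ℝ) ≤ 1)] at hs
      show f ((s+1)/4) * ((s+1)/4)^3 = _
      rw [f_q1 hs]
    rw [hcongr,
        show (fun s : ℝ => (((1:ℝ)/8) + ((3:ℝ)/8) * f s) * ((s+1)/4)^3)
          = (fun s : ℝ => ((((1:ℝ)/512)*s^0 + ((3:ℝ)/512)*s^1 + ((3:ℝ)/512)*s^2 + ((1:ℝ)/512)*s^3 + (0:ℝ)*s^4)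
            + (((3:ℝ)/512)*(f s * s^0) + ((9:ℝ)/512)*(f s * s^1) + ((9:ℝ)/512)*(f s * s^2) + ((3:ℝ)/512)*(f s * s^3))))
          from funext fun s => by ring,
        poly_f_integral]
    norm_num
  have hA2 : (∫ s in (0:ℝ)..1, (fun x : ℝ => f x * x^3) ((s+2)/4)) = ((65:ℝ)/512) + ((3:ℝ)/64)*J 0 + ((9:ℝ)/128)*J 1 + ((9:ℝ)/256)*J 2 + ((3:ℝ)/512)*J 3 := by
    have hcongr : (∫ s in (0:ℝ)..1, (fun x : ℝ => f x * x^3) ((s+2)/4))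
        = ∫ s in (0:ℝ)..1, (((1:ℝ)/2) + ((3:ℝ)/8) * f s) * ((s+2)/4)^3 := by
      apply intervalIntegral.integral_congr
      intro s hs
      rw [Set.uIcc_of_le (by norm_num : (0:ℝ) ≤ 1)] at hs
      show f ((s+2)/4) * ((s+2)/4)^3 = _
      rw [f_q2 hs]
    rw [hcongr,
        show (fun s : ℝ => (((1:ℝ)/2) + ((3:ℝ)/8) * f s) * ((s+2)/4)^3)
          = (fun s : ℝ => ((((1:ℝ)/16)*s^0 + ((3:ℝ)/32)*s^1 + ((3:ℝ)/64)*s^2 + ((1:ℝ)/128)*s^3 + (0:ℝ)*s^4)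
            + (((3:ℝ)/64)*(f s * s^0) + ((9:ℝ)/128)*(f s * s^1) + ((9:ℝ)/256)*(f s * s^2) + ((3:ℝ)/512)*(f s * s^3))))
          from funext fun s => by ring,
        poly_f_integral]
    norm_num
  have hA3 : (∫ s in (0:ℝ)..1, (fun x : ℝ => f x * x^3) ((s+3)/4)) = ((1225:ℝ)/2048) + ((27:ℝ)/512)*J 0 + ((27:ℝ)/512)*J 1 + ((9:ℝ)/512)*J 2 + ((1:ℝ)/512)*J 3 := by
    have hcongr : (∫ s in (0:ℝ)..1, (fun x : ℝ => f x * x^3) ((s+3)/4))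
        = ∫ s in (0:ℝ)..1, (((7:ℝ)/8) + ((1:ℝ)/8) * f s) * ((s+3)/4)^3 := by
      apply intervalIntegral.integral_congr
      intro s hs
      rw [Set.uIcc_of_le (by norm_num : (0:ℝ) ≤ 1)] at hs
      show f ((s+3)/4) * ((s+3)/4)^3 = _
      rw [f_q3 hs]
    rw [hcongr,
        show (fun s : ℝ => (((7:ℝ)/8) + ((1:ℝ)/8) * f s) * ((s+3)/4)^3)
          = (fun s : ℝ => ((((189:ℝ)/512)*s^0 + ((189:ℝ)/512)*s^1 + ((63:ℝ)/512)*s^2 + ((7:ℝ)/512)*s^3 + (0:ℝ)*s^4)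
            + (((27:ℝ)/512)*(f s * s^0) + ((27:ℝ)/512)*(f s * s^1) + ((9:ℝ)/512)*(f s * s^2) + ((1:ℝ)/512)*(f s * s^3))))
          from funext fun s => by ring,
        poly_f_integral]
    norm_num
  rw [hA0, hA1, hA2, hA3] at hq
  have hJ : J 3 = ∫ x in (0:ℝ)..1, (fun x : ℝ => f x * x^3) x := rfl
  have heq := hJ.trans hq
  linarith [heq, J0val, J1val, J2val]


lemma core01 (al be : ℝ) :
    (63/4161600) * al^2 ≤ ∫ s in (0:ℝ)..1, (f s - (al*s+be))^2 := by
  have hGcont : Continuous (fun s : ℝ => f s - (al*s+be)) :=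
    f_cont.sub (by continuity)
  have expand : ∀ (lam : ℝ) (q : ℝ → ℝ), Continuous q →
      ∫ s in (0:ℝ)..1, ((f s - (al*s+be)) - lam * q s)^2
      = (∫ s in (0:ℝ)..1, (f s - (al*s+be))^2)
        - 2*lam*(∫ s in (0:ℝ)..1, (f s - (al*s+be)) * q s)
        + lam^2*(∫ s in (0:ℝ)..1, (q s)^2) := by
    intro lam q hq
    have h1 : (fun s => ((f s - (al*s+be)) - lam * q s)^2)
        = fun s => ((f s - (al*s+be))^2 - (2*lam)*((f s - (al*s+be)) * q s))
          + lam^2*((q s)^2) :=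
      funext fun s => by ring
    have i1 : IntervalIntegrable (fun s : ℝ => (f s - (al*s+be))^2) volume 0 1 :=
      ((hGcont.pow 2)).intervalIntegrable 0 1
    have i2 : IntervalIntegrable (fun s : ℝ => (2*lam)*((f s - (al*s+be)) * q s)) volume 0 1 :=
      (continuous_const.mul (hGcont.mul hq)).intervalIntegrable 0 1
    have i3 : IntervalIntegrable (fun s : ℝ => lam^2*((q s)^2)) volume 0 1 :=
      (continuous_const.mul (hq.pow 2)).intervalIntegrable 0 1
    rw [h1, intervalIntegral.integral_add (i1.sub i2) i3,
        intervalIntegral.integral_sub i1 i2,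
        intervalIntegral.integral_const_mul, intervalIntegral.integral_const_mul]
  rcases le_or_gt (al^2) 144 with hc | hc
  · -- small slope : use the cubic Legendre test function
    have hGpsi : ∫ s in (0:ℝ)..1, ((f s - (al*s+be)) * (20*s^3 - 30*s^2 + 12*s - 1))
        = -3/170 := by
      rw [show (fun s : ℝ => (f s - (al*s+be)) * (20*s^3 - 30*s^2 + 12*s - 1))
          = (fun s : ℝ => ((be*s^0 + (al-12*be)*s^1 + (30*be-12*al)*s^2 + (30*al-20*be)*s^3
              + (-20*al)*s^4)
            + ((-1:ℝ)*(f s * s^0) + (12:ℝ)*(f s * s^1) + (-30:ℝ)*(f s * s^2)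
              + (20:ℝ)*(f s * s^3))))
          from funext fun s => by ring,
        poly_f_integral, J0val, J1val, J2val, J3val]
      ring
    have hpsi2 : ∫ s in (0:ℝ)..1, ((20*s^3 - 30*s^2 + 12*s - 1))^2 = 1/7 := by
      rw [show (fun s : ℝ => ((20*s^3 - 30*s^2 + 12*s - 1))^2)
          = (fun s : ℝ => ((1:ℝ)*s^0 + (-24:ℝ)*s^1 + (204:ℝ)*s^2 + (-760:ℝ)*s^3
            + (1380:ℝ)*s^4 + (-1200:ℝ)*s^5 + (400:ℝ)*s^6))
          from funext fun s => by ring, poly_integral6]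
      norm_num
    have hexp := expand (-21/170) (fun s => 20*s^3 - 30*s^2 + 12*s - 1) (by continuity)
    rw [hGpsi, hpsi2] at hexp
    have hnn : 0 ≤ ∫ s in (0:ℝ)..1,
        ((f s - (al*s+be)) - (-21/170) * (20*s^3 - 30*s^2 + 12*s - 1))^2 :=
      intervalIntegral.integral_nonneg (by norm_num) (fun u _ => sq_nonneg _)
    rw [hexp] at hnn
    nlinarith [hnn, hc]
  · -- large slope : use the linear test function
    have hGphi : ∫ s in (0:ℝ)..1, ((f s - (al*s+be)) * (s - 1/2)) = 1/10 - al/12 := by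
      rw [show (fun s : ℝ => (f s - (al*s+be)) * (s - 1/2))
          = (fun s : ℝ => ((be/2*s^0 + (al/2-be)*s^1 + (-al)*s^2 + (0:ℝ)*s^3 + (0:ℝ)*s^4)
            + ((-1/2:ℝ)*(f s * s^0) + (1:ℝ)*(f s * s^1) + (0:ℝ)*(f s * s^2)
              + (0:ℝ)*(f s * s^3))))
          from funext fun s => by ring,
        poly_f_integral, J0val, J1val, J2val, J3val]
      ring
    have hphi2 : ∫ s in (0:ℝ)..1, ((s - 1/2 : ℝ))^2 = 1/12 := by
      rw [show (fun s : ℝ => ((s - 1/2 : ℝ))^2)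
          = (fun s : ℝ => ((1/4:ℝ)*s^0 + (-1:ℝ)*s^1 + (1:ℝ)*s^2 + (0:ℝ)*s^3
            + (0:ℝ)*s^4 + (0:ℝ)*s^5 + (0:ℝ)*s^6))
          from funext fun s => by ring, poly_integral6]
      norm_num
    have hexp := expand (6/5 - al) (fun s => s - 1/2) (by continuity)
    rw [hGphi, hphi2] at hexp
    have hnn : 0 ≤ ∫ s in (0:ℝ)..1,
        ((f s - (al*s+be)) - (6/5 - al) * (s - 1/2))^2 :=
      intervalIntegral.integral_nonneg (by norm_num) (fun u _ => sq_nonneg _)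
    rw [hexp] at hnn
    nlinarith [hnn, hc, sq_nonneg (al - 12), sq_nonneg (al + 12)]


lemma key_integral (n : ℕ) (j : ℤ) (a b : ℝ) :
    (63/4161600) * a^2 * (((1:ℝ)/4)^n)^3
      ≤ ∫ x in ((j:ℝ)*((1:ℝ)/4)^n)..((j:ℝ)*((1:ℝ)/4)^n + ((1:ℝ)/4)^n), (f x - (a*x+b))^2 := by
  have hLpos : (0:ℝ) < ((1:ℝ)/4)^n := by positivity
  have hmpos : 0 < W n j := W_pos n j
  have hcomp := intervalIntegral.integral_comp_mul_add (a := 0) (b := 1)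
    (fun x : ℝ => (f x - (a*x+b))^2) (ne_of_gt hLpos) ((j:ℝ)*((1:ℝ)/4)^n)
  have hb1 : ((1:ℝ)/4)^n*0 + (j:ℝ)*((1:ℝ)/4)^n = (j:ℝ)*((1:ℝ)/4)^n := by ring
  have hb2 : ((1:ℝ)/4)^n*1 + (j:ℝ)*((1:ℝ)/4)^n = (j:ℝ)*((1:ℝ)/4)^n + ((1:ℝ)/4)^n := by ring
  rw [hb1, hb2] at hcomp
  have hinner : ∫ t in (0:ℝ)..1, (fun x : ℝ => (f x - (a*x+b))^2) (((1:ℝ)/4)^n*t + (j:ℝ)*((1:ℝ)/4)^n)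
      = ∫ t in (0:ℝ)..1, (W n j)^2 *
        (f t - ((a*((1:ℝ)/4)^n/(W n j))*t + (a*((j:ℝ)*((1:ℝ)/4)^n) + b - f ((j:ℝ)*((1:ℝ)/4)^n))/(W n j)))^2 := by
    apply intervalIntegral.integral_congr
    intro t ht
    rw [Set.uIcc_of_le (by norm_num : (0:ℝ) ≤ 1)] at ht
    show (f (((1:ℝ)/4)^n*t + (j:ℝ)*((1:ℝ)/4)^n) - (a*(((1:ℝ)/4)^n*t + (j:ℝ)*((1:ℝ)/4)^n)+b))^2 = _
    have hself := selfSim n j ht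
    have harg : ((j:ℝ) + t)/4^n = ((1:ℝ)/4)^n*t + (j:ℝ)*((1:ℝ)/4)^n := by
      rw [Lpow]
      field_simp
      ring
    have hgp : (j:ℝ)/4^n = (j:ℝ)*((1:ℝ)/4)^n := grid_pt n j
    rw [harg, hgp] at hself
    rw [hself]
    field_simp
    ring
  rw [hinner, intervalIntegral.integral_const_mul] at hcomp
  have hcore := core01 (a*((1:ℝ)/4)^n/(W n j))
    ((a*((j:ℝ)*((1:ℝ)/4)^n) + b - f ((j:ℝ)*((1:ℝ)/4)^n))/(W n j))
  have hsmul : (((1:ℝ)/4)^n)⁻¹ • (∫ x in ((j:ℝ)*((1:ℝ)/4)^n)..((j:ℝ)*((1:ℝ)/4)^n + ((1:ℝ)/4)^n), (f x - (a*x+b))^2)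
      = (((1:ℝ)/4)^n)⁻¹ * (∫ x in ((j:ℝ)*((1:ℝ)/4)^n)..((j:ℝ)*((1:ℝ)/4)^n + ((1:ℝ)/4)^n), (f x - (a*x+b))^2) := rfl
  rw [hsmul] at hcomp
  have hal2 : (W n j)^2 * ((63/4161600) * (a*((1:ℝ)/4)^n/(W n j))^2)
      = (63/4161600) * a^2 * (((1:ℝ)/4)^n)^2 := by
    field_simp
  have hstep : (63/4161600) * a^2 * (((1:ℝ)/4)^n)^2
      ≤ (((1:ℝ)/4)^n)⁻¹ * (∫ x in ((j:ℝ)*((1:ℝ)/4)^n)..((j:ℝ)*((1:ℝ)/4)^n + ((1:ℝ)/4)^n), (f x - (a*x+b))^2) := by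
    rw [← hcomp, ← hal2]
    have := mul_le_mul_of_nonneg_left hcore (le_of_lt (mul_pos hmpos hmpos))
    calc (W n j)^2 * ((63/4161600) * (a*((1:ℝ)/4)^n/(W n j))^2)
        ≤ (W n j)^2 * ∫ t in (0:ℝ)..1,
            (f t - ((a*((1:ℝ)/4)^n/(W n j))*t + (a*((j:ℝ)*((1:ℝ)/4)^n) + b - f ((j:ℝ)*((1:ℝ)/4)^n))/(W n j)))^2 := by
          apply mul_le_mul_of_nonneg_left hcore (by positivity)
    _ = _ := rfl
  have hfin := mul_le_mul_of_nonneg_left hstep (le_of_lt hLpos)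
  calc (63/4161600) * a^2 * (((1:ℝ)/4)^n)^3
      = ((1:ℝ)/4)^n * ((63/4161600) * a^2 * (((1:ℝ)/4)^n)^2) := by ring
  _ ≤ ((1:ℝ)/4)^n * ((((1:ℝ)/4)^n)⁻¹ * (∫ x in ((j:ℝ)*((1:ℝ)/4)^n)..((j:ℝ)*((1:ℝ)/4)^n + ((1:ℝ)/4)^n), (f x - (a*x+b))^2)) := hfin
  _ = ∫ x in ((j:ℝ)*((1:ℝ)/4)^n)..((j:ℝ)*((1:ℝ)/4)^n + ((1:ℝ)/4)^n), (f x - (a*x+b))^2 := by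
        field_simp

lemma avg_bound (u v : ℝ) (n : ℕ) (j : ℤ) (a b : ℝ) (ha : a ≠ 0)
    (h1 : u ≤ (j:ℝ)*((1:ℝ)/4)^n) (h2 : (j:ℝ)*((1:ℝ)/4)^n + ((1:ℝ)/4)^n ≤ v)
    (h3 : v - u ≤ 2*((1:ℝ)/4)^n) :
    63/33292800 ≤ ⨍ x in Icc u v, (f x - (a*x+b))^2 / (|a| * Metric.diam (Icc u v))^2 := by
  have hLpos : (0:ℝ) < ((1:ℝ)/4)^n := by positivity
  have huv : u < v := by nlinarith
  have hVpos : 0 < v - u := by linarith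
  have ha2 : 0 < a^2 := by positivity
  rw [MeasureTheory.setAverage_eq, measureReal_def, Real.volume_Icc, ENNReal.toReal_ofReal (le_of_lt hVpos),
      Real.diam_Icc (le_of_lt huv)]
  rw [MeasureTheory.integral_div]
  have hint : IntegrableOn (fun x => (f x - (a*x+b))^2) (Icc u v) volume :=
    ((f_cont.sub (by continuity)).pow 2).integrableOn_Icc
  have hmono : ∫ x in Icc ((j:ℝ)*((1:ℝ)/4)^n) ((j:ℝ)*((1:ℝ)/4)^n + ((1:ℝ)/4)^n), (f x - (a*x+b))^2
      ≤ ∫ x in Icc u v, (f x - (a*x+b))^2 := by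
    apply MeasureTheory.setIntegral_mono_set hint
    · exact Filter.Eventually.of_forall (fun x => sq_nonneg _)
    · exact HasSubset.Subset.eventuallyLE (Icc_subset_Icc h1 h2)
  have hIcc : ∫ x in Icc ((j:ℝ)*((1:ℝ)/4)^n) ((j:ℝ)*((1:ℝ)/4)^n + ((1:ℝ)/4)^n), (f x - (a*x+b))^2
      = ∫ x in ((j:ℝ)*((1:ℝ)/4)^n)..((j:ℝ)*((1:ℝ)/4)^n + ((1:ℝ)/4)^n), (f x - (a*x+b))^2 := by
    rw [MeasureTheory.integral_Icc_eq_integral_Ioc,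
        intervalIntegral.integral_of_le (by linarith : (j:ℝ)*((1:ℝ)/4)^n ≤ (j:ℝ)*((1:ℝ)/4)^n + ((1:ℝ)/4)^n)]
  have hIlb : (63/4161600) * a^2 * (((1:ℝ)/4)^n)^3 ≤ ∫ x in Icc u v, (f x - (a*x+b))^2 :=
    le_trans (by rw [hIcc]; exact key_integral n j a b) hmono
  have hD : (|a| * (v - u))^2 = a^2 * (v-u)^2 := by
    rw [mul_pow, sq_abs]
  rw [smul_eq_mul, hD]
  have hgoal : (63:ℝ)/33292800 ≤ (v-u)⁻¹ * ((∫ x in Icc u v, (f x - (a*x+b))^2) / (a^2*(v-u)^2)) := by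
    rw [inv_mul_eq_div, div_div, le_div_iff₀ (by positivity : (0:ℝ) < a^2*(v-u)^2*(v-u))]
    have hV3 : a^2*(v-u)^2*(v-u) = a^2*(v-u)^3 := by ring
    rw [hV3]
    have h8 : (v-u)^3 ≤ 8*(((1:ℝ)/4)^n)^3 := by
      calc (v-u)^3 ≤ (2*((1:ℝ)/4)^n)^3 := pow_le_pow_left₀ (by linarith) h3 3
      _ = 8*(((1:ℝ)/4)^n)^3 := by ring
    calc (63:ℝ)/33292800 * (a^2*(v-u)^3) ≤ (63:ℝ)/33292800 * (a^2*(8*(((1:ℝ)/4)^n)^3)) := by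
          have := mul_le_mul_of_nonneg_left h8 (le_of_lt ha2)
          nlinarith
    _ = (63/4161600) * a^2 * (((1:ℝ)/4)^n)^3 := by ring
    _ ≤ _ := hIlb
  exact hgoal


lemma omega_dyadic (n : ℤ) (hn : n ≤ 0) (j : ℤ) :
    Real.sqrt (63/33292800) ≤ omegaI f (Icc ((2:ℝ)^n * j) ((2:ℝ)^n * (j+1))) := by
  haveI : Nonempty {p : ℝ × ℝ // p.1 ≠ 0} := ⟨⟨(1,0), one_ne_zero⟩⟩
  apply le_ciInf
  intro A
  apply Real.sqrt_le_sqrt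
  obtain ⟨m, hm⟩ : ∃ m : ℕ, (-n) = 2*m ∨ (-n) = 2*m+1 := ⟨((-n).toNat)/2, by omega⟩
  rcases hm with he | ho
  · have h2n : (2:ℝ)^n = ((1:ℝ)/4)^m := by
      have hn' : n = -((2*m : ℕ) : ℤ) := by push_cast; omega
      rw [hn', zpow_neg, zpow_natCast, pow_mul]
      rw [show ((1:ℝ)/4)^m = (((2:ℝ)^2)^m)⁻¹ by rw [← inv_pow]; norm_num]
    have hLpos : (0:ℝ) < ((1:ℝ)/4)^m := by positivity
    apply avg_bound _ _ m j _ _ A.prop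
    · rw [h2n]
      exact le_of_eq (mul_comm _ _)
    · rw [h2n]
      have : ((1:ℝ)/4)^m * ((j:ℝ)+1) = (j:ℝ)*((1:ℝ)/4)^m + ((1:ℝ)/4)^m := by ring
      push_cast
      linarith [le_of_eq this]
    · rw [h2n]
      push_cast
      nlinarith [hLpos]
  · have h2n : (2:ℝ)^n = 2*((1:ℝ)/4)^(m+1) := by
      have hn' : n = -((2*m+1 : ℕ) : ℤ) := by push_cast; omega
      rw [hn', zpow_neg, zpow_natCast]
      rw [show ((2:ℝ))^(2*m+1) = 2*((2:ℝ)^2)^m by rw [← pow_mul]; ring]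
      rw [show 2*((1:ℝ)/4)^(m+1) = 2*(((2:ℝ)^2)^(m+1))⁻¹ by rw [← inv_pow]; norm_num]
      rw [show (((2:ℝ)^2)^(m+1))⁻¹ = (((2:ℝ)^2)^m)⁻¹ * ((2:ℝ)^2)⁻¹ by rw [pow_succ, mul_inv]]
      rw [mul_inv]
      ring
    have hLpos : (0:ℝ) < ((1:ℝ)/4)^(m+1) := by positivity
    apply avg_bound _ _ (m+1) (2*j) _ _ A.prop
    · rw [h2n]
      push_cast
      nlinarith [hLpos]
    · rw [h2n]
      push_cast
      nlinarith [hLpos]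
    · rw [h2n]
      push_cast
      nlinarith [hLpos]

theorem main :
    ∃ (f : ℝ → ℝ) (η : ℝ → ℝ) (c : ℝ),
      StrictMono f ∧ Continuous f ∧ Function.Surjective f ∧
      StrictMonoOn η (Set.Ioi 0) ∧ Set.BijOn η (Set.Ioi 0) (Set.Ioi 0) ∧
      (∀ x y z : ℝ, x ≠ y → x ≠ z → y ≠ z →
        |f x - f y| ≤ η (|x - y| / |x - z|) * |f x - f z|) ∧
      0 < c ∧
      ∀ (n : ℤ), n ≤ 0 → ∀ (j : ℤ),
        c ≤ omegaI f (Set.Icc ((2 : ℝ) ^ n * j) ((2 : ℝ) ^ n * (j + 1))) := by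
  refine ⟨f, eta, Real.sqrt (63/33292800), f_strictMono, f_cont, f_surj,
    eta_strictMono, eta_bijOn, ?_, Real.sqrt_pos.mpr (by norm_num), ?_⟩
  · intro x y z hxy hxz _
    exact f_qs x y z hxy hxz
  · intro n hn j
    exact omega_dyadic n hn j

end QSC
end

/-- There is an increasing quasisymmetric homeomorphism `f : ℝ → ℝ` and `c > 0` such that
`ω_f(Q) ≥ c` for every dyadic interval `Q` of length at most `1`. -/
theorem exists_qs_line_omega_bounded_below :
    ∃ (f : ℝ → ℝ) (η : ℝ → ℝ) (c : ℝ),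
      StrictMono f ∧ Continuous f ∧ Function.Surjective f ∧
      StrictMonoOn η (Set.Ioi 0) ∧ Set.BijOn η (Set.Ioi 0) (Set.Ioi 0) ∧
      (∀ x y z : ℝ, x ≠ y → x ≠ z → y ≠ z →
        |f x - f y| ≤ η (|x - y| / |x - z|) * |f x - f z|) ∧
      0 < c ∧
      ∀ (n : ℤ), n ≤ 0 → ∀ (j : ℤ),
        c ≤ omegaI f (Set.Icc ((2 : ℝ) ^ n * j) ((2 : ℝ) ^ n * (j + 1))) :=
  QSC.main
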